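/- arXiv:1503.01763 — 6 statements merged into one kernel-verified Lean document; each statement's English description precedes it below -/
import Mathlib

section
/- Let S_0, S_1, ..., S_{N-1} be operators on a Hilbert space satisfying the Cuntz relations S_j* S_k = δ_{jk} I. Let f be a unit vector with S_0 f = f. Then the family {S_ω f : ω ∈ X} is orthonormal, where X consists of all words in the alphabet {0,...,N-1} of length 1, together with all words of length ≥ 2 whose last (rightmost) letter is nonzero, and S_ω denotes the composition S_{j_K} ∘ ... ∘ S_{j_1} for ω = j_K j_{K-1} ... j_1. -/
/-- If `S 0, …, S (N-1)` satisfy the Cuntz relations `Sⱼ* Sₖ = δⱼₖ I`,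
`f` is a unit vector with `S 0 f = f`, then the family `{S_ω f}` indexed by words
`ω = j_K … j_1` (as lists, leftmost letter first) which have length 1, or length ≥ 2 with
rightmost letter `j_1 ≠ 0`, is orthonormal.  Here `S_ω f = S_{j_K}(⋯(S_{j_1} f))`. -/
theorem cuntz_orbit_orthonormal
    {H : Type*} [NormedAddCommGroup H] [InnerProductSpace ℂ H] [CompleteSpace H]
    (N : ℕ) [NeZero N] (S : Fin N → H →L[ℂ] H)
    (hCuntz : ∀ j k : Fin N, (ContinuousLinearMap.adjoint (S j)).comp (S k) =
      if j = k then ContinuousLinearMap.id ℂ H else 0)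
    (f : H) (hf : ‖f‖ = 1) (hfix : S 0 f = f) :
    Orthonormal ℂ
      (fun ω : {l : List (Fin N) //
          l.length = 1 ∨ (2 ≤ l.length ∧ l.getLast? ≠ some 0)} =>
        (ω : List (Fin N)).foldr (fun j v => S j v) f) := by
  rw [orthonormal_iff_ite]
  set F : List (Fin N) → H := fun l => l.foldr (fun j v => S j v) f with hF
  have key : ∀ (j k : Fin N) (x y : H),
      (inner ℂ (S j x) (S k y) : ℂ) = if j = k then inner ℂ x y else 0 := by
    intro j k x y
    have h := congrArg (fun T : H →L[ℂ] H => (inner ℂ x (T y) : ℂ)) (hCuntz j k)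
    simp only [ContinuousLinearMap.comp_apply] at h
    rw [ContinuousLinearMap.adjoint_inner_right] at h
    rw [h]
    split <;> simp
  have hself : ∀ l : List (Fin N), (inner ℂ (F l) (F l) : ℂ) = 1 := by
    intro l
    induction l with
    | nil =>
      simp only [hF, List.foldr_nil]
      rw [inner_self_eq_norm_sq_to_K, hf]; norm_num
    | cons j t ih =>
      show (inner ℂ (S j (F t)) (S j (F t)) : ℂ) = 1
      rw [key, if_pos rfl, ih]
  have htail : ∀ (j : Fin N) (t : List (Fin N)),
      (j :: t).getLast? ≠ some 0 → t.getLast? ≠ some 0 := by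
    intro j t h
    cases t with
    | nil => simp
    | cons k s => rwa [List.getLast?_cons_cons] at h
  have hA : ∀ l : List (Fin N), l ≠ [] → l.getLast? ≠ some 0 →
      (inner ℂ f (F l) : ℂ) = 0 := by
    intro l
    induction l with
    | nil => simp
    | cons j t ih =>
      intro _ hlast
      have h1 : (inner ℂ f (F (j :: t)) : ℂ)
          = if (0 : Fin N) = j then inner ℂ f (F t) else 0 := by
        show (inner ℂ f (S j (F t)) : ℂ) = _
        conv_lhs => rw [← hfix]
        exact key 0 j f (F t)
      rw [h1]
      split
      next h =>
        cases t with
        | nil =>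
          exfalso
          apply hlast
          simp [← h]
        | cons k s =>
          exact ih (by simp) (htail j _ hlast)
      next => rfl
  have hB : ∀ a b : List (Fin N), a.getLast? ≠ some 0 → b.getLast? ≠ some 0 →
      a ≠ b → (inner ℂ (F a) (F b) : ℂ) = 0 := by
    intro a
    induction a with
    | nil =>
      intro b _ hb hne
      exact hA b (fun h => hne h.symm) hb
    | cons j t ih =>
      intro b ha hb hne
      cases b with
      | nil =>
        rw [inner_eq_zero_symm]
        exact hA (j :: t) (by simp) ha
      | cons k s =>
        have h1 : (inner ℂ (F (j :: t)) (F (k :: s)) : ℂ)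
            = if j = k then inner ℂ (F t) (F s) else 0 := key j k (F t) (F s)
        rw [h1]
        split
        next h =>
          subst h
          exact ih s (htail j t ha) (htail j s hb) (fun hts => hne (by rw [hts]))
        next => rfl
  have hX : ∀ l : List (Fin N),
      (l.length = 1 ∨ (2 ≤ l.length ∧ l.getLast? ≠ some 0)) →
      ∃ j t, l = j :: t ∧ t.getLast? ≠ some 0 := by
    intro l hl
    cases l with
    | nil => rcases hl with h | h <;> simp at h
    | cons j t =>
      refine ⟨j, t, rfl, ?_⟩
      rcases hl with h | ⟨_, h⟩
      · have : t = [] := by simpa using h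
        simp [this]
      · exact htail j t h
  intro ω ω'
  split
  next h => subst h; exact hself ω.val
  next h =>
    obtain ⟨j, t, hjt, ht⟩ := hX ω.val ω.prop
    obtain ⟨k, s, hks, hs⟩ := hX ω'.val ω'.prop
    have hne : (ω : List (Fin N)) ≠ (ω' : List (Fin N)) := by
      intro heq; exact h (Subtype.ext heq)
    show (inner ℂ (F ω.val) (F ω'.val) : ℂ) = 0
    rw [hjt, hks]
    have h1 : (inner ℂ (F (j :: t)) (F (k :: s)) : ℂ)
        = if j = k then inner ℂ (F t) (F s) else 0 := key j k (F t) (F s)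
    rw [h1]
    split
    next hjk =>
      subst hjk
      have hts : t ≠ s := by
        intro he; apply hne; rw [hjt, hks, he]
      exact hB t s ht hs hts
    next => rfl
end

section
/- The product measure μ_4 × λ is the unique invariant probability measure for the iterated function system on ℝ² given by Υ_0(x,y) = (x/4, y/2), Υ_1(x,y) = ((x+2)/4, y/2), Υ_2(x,y) = (x/4, (y+1)/2), Υ_3(x,y) = ((x+2)/4, (y+1)/2) with equal weights 1/4; i.e., ∫ f d(μ_4×λ) = (1/4) Σ_{j=0}^{3} ∫ f ∘ Υ_j d(μ_4×λ) for all continuous f : ℝ² → ℂ. -/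
open MeasureTheory Set

/-- The four maps of the IFS on ℝ²: Υ₀(x,y)=(x/4,y/2), Υ₁(x,y)=((x+2)/4,y/2),
Υ₂(x,y)=(x/4,(y+1)/2), Υ₃(x,y)=((x+2)/4,(y+1)/2). -/
noncomputable def Ups : Fin 4 → ℝ × ℝ → ℝ × ℝ :=
  ![fun z => (z.1 / 4, z.2 / 2), fun z => ((z.1 + 2) / 4, z.2 / 2),
    fun z => (z.1 / 4, (z.2 + 1) / 2), fun z => ((z.1 + 2) / 4, (z.2 + 1) / 2)]

/-- A measure `ρ` on ℝ² is invariant for the IFS `Ups` with equal weights 1/4 if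
`∫ f dρ = (1/4) Σ_j ∫ f ∘ Υ_j dρ` for every bounded continuous `f : ℝ² → ℂ`. -/
def IsInvariant2D (ρ : Measure (ℝ × ℝ)) : Prop :=
  ∀ f : ℝ × ℝ → ℂ, Continuous f → (∃ C : ℝ, ∀ z, ‖f z‖ ≤ C) →
    ∫ z, f z ∂ρ = (1 / 4 : ℂ) * ∑ j : Fin 4, ∫ z, f (Ups j z) ∂ρ

open scoped NNReal ENNReal

lemma ups_cont (j : Fin 4) : Continuous (Ups j) := by
  fin_cases j
  · exact ((continuous_fst.div_const 4).prodMk (continuous_snd.div_const 2))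
  · exact (((continuous_fst.add continuous_const).div_const 4).prodMk
      (continuous_snd.div_const 2))
  · exact ((continuous_fst.div_const 4).prodMk
      ((continuous_snd.add continuous_const).div_const 2))
  · exact (((continuous_fst.add continuous_const).div_const 4).prodMk
      ((continuous_snd.add continuous_const).div_const 2))

lemma ups_meas (j : Fin 4) : Measurable (Ups j) := (ups_cont j).measurable

private lemma div4_abs (a b D : ℝ) (h : |a - b| ≤ D) : |a / 4 - b / 4| ≤ D / 2 := by
  have h0 := abs_nonneg (a - b)
  have h1 : |a / 4 - b / 4| = |a - b| / 4 := by
    rw [show a / 4 - b / 4 = (a - b) / 4 by ring, abs_div]; norm_num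
  linarith

private lemma div2_abs (a b D : ℝ) (h : |a - b| ≤ D) : |a / 2 - b / 2| ≤ D / 2 := by
  have h1 : |a / 2 - b / 2| = |a - b| / 2 := by
    rw [show a / 2 - b / 2 = (a - b) / 2 by ring, abs_div]; norm_num
  linarith

lemma ups_lip (j : Fin 4) (z z' : ℝ × ℝ) :
    dist (Ups j z) (Ups j z') ≤ dist z z' / 2 := by
  have h1 : |z.1 - z'.1| ≤ dist z z' := by
    rw [Prod.dist_eq, Real.dist_eq]; exact le_max_left _ _
  have h2 : |z.2 - z'.2| ≤ dist z z' := by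
    rw [Prod.dist_eq, Real.dist_eq]; exact le_max_right _ _
  fin_cases j
  · show dist ((z.1 / 4, z.2 / 2) : ℝ × ℝ) ((z'.1 / 4, z'.2 / 2)) ≤ dist z z' / 2
    rw [Prod.dist_eq]
    exact max_le (by rw [Real.dist_eq]; exact div4_abs _ _ _ h1)
      (by rw [Real.dist_eq]; exact div2_abs _ _ _ h2)
  · show dist (((z.1 + 2) / 4, z.2 / 2) : ℝ × ℝ) (((z'.1 + 2) / 4, z'.2 / 2)) ≤ dist z z' / 2
    rw [Prod.dist_eq]
    refine max_le ?_ (by rw [Real.dist_eq]; exact div2_abs _ _ _ h2)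
    rw [Real.dist_eq, show (z.1 + 2) / 4 - (z'.1 + 2) / 4 = z.1 / 4 - z'.1 / 4 by ring]
    exact div4_abs _ _ _ h1
  · show dist ((z.1 / 4, (z.2 + 1) / 2) : ℝ × ℝ) ((z'.1 / 4, (z'.2 + 1) / 2)) ≤ dist z z' / 2
    rw [Prod.dist_eq]
    refine max_le (by rw [Real.dist_eq]; exact div4_abs _ _ _ h1) ?_
    rw [Real.dist_eq, show (z.2 + 1) / 2 - (z'.2 + 1) / 2 = z.2 / 2 - z'.2 / 2 by ring]
    exact div2_abs _ _ _ h2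
  · show dist (((z.1 + 2) / 4, (z.2 + 1) / 2) : ℝ × ℝ) (((z'.1 + 2) / 4, (z'.2 + 1) / 2))
      ≤ dist z z' / 2
    rw [Prod.dist_eq]
    refine max_le ?_ ?_
    · rw [Real.dist_eq, show (z.1 + 2) / 4 - (z'.1 + 2) / 4 = z.1 / 4 - z'.1 / 4 by ring]
      exact div4_abs _ _ _ h1
    · rw [Real.dist_eq, show (z.2 + 1) / 2 - (z'.2 + 1) / 2 = z.2 / 2 - z'.2 / 2 by ring]
      exact div2_abs _ _ _ h2

lemma ups_norm (j : Fin 4) (z : ℝ × ℝ) {R : ℝ} (hz : ‖z‖ ≤ R) (hR : 1 ≤ R) :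
    ‖Ups j z‖ ≤ R := by
  have hx : |z.1| ≤ R := by
    calc |z.1| = ‖z.1‖ := (Real.norm_eq_abs _).symm
    _ ≤ ‖z‖ := by rw [Prod.norm_def]; exact le_max_left _ _
    _ ≤ R := hz
  have hy : |z.2| ≤ R := by
    calc |z.2| = ‖z.2‖ := (Real.norm_eq_abs _).symm
    _ ≤ ‖z‖ := by rw [Prod.norm_def]; exact le_max_right _ _
    _ ≤ R := hz
  have e4 : |z.1 / 4| ≤ R := by
    rw [abs_div]; rw [show |(4:ℝ)| = 4 by norm_num]; linarith [abs_nonneg z.1]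
  have e42 : |(z.1 + 2) / 4| ≤ R := by
    rw [abs_div, show |(4:ℝ)| = 4 by norm_num]
    have := abs_add_le z.1 2
    have h2 : |(2:ℝ)| = 2 := by norm_num
    linarith
  have e2 : |z.2 / 2| ≤ R := by
    rw [abs_div, show |(2:ℝ)| = 2 by norm_num]; linarith [abs_nonneg z.2]
  have e21 : |(z.2 + 1) / 2| ≤ R := by
    rw [abs_div, show |(2:ℝ)| = 2 by norm_num]
    have := abs_add_le z.2 1
    have h1 : |(1:ℝ)| = 1 := by norm_num
    linarith
  fin_cases j
  · show ‖((z.1 / 4, z.2 / 2) : ℝ × ℝ)‖ ≤ R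
    rw [Prod.norm_def]
    exact max_le (by rw [Real.norm_eq_abs]; exact e4) (by rw [Real.norm_eq_abs]; exact e2)
  · show ‖(((z.1 + 2) / 4, z.2 / 2) : ℝ × ℝ)‖ ≤ R
    rw [Prod.norm_def]
    exact max_le (by rw [Real.norm_eq_abs]; exact e42) (by rw [Real.norm_eq_abs]; exact e2)
  · show ‖((z.1 / 4, (z.2 + 1) / 2) : ℝ × ℝ)‖ ≤ R
    rw [Prod.norm_def]
    exact max_le (by rw [Real.norm_eq_abs]; exact e4) (by rw [Real.norm_eq_abs]; exact e21)
  · show ‖(((z.1 + 2) / 4, (z.2 + 1) / 2) : ℝ × ℝ)‖ ≤ R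
    rw [Prod.norm_def]
    exact max_le (by rw [Real.norm_eq_abs]; exact e42) (by rw [Real.norm_eq_abs]; exact e21)

noncomputable def TOp (f : ℝ × ℝ → ℂ) : ℝ × ℝ → ℂ :=
  fun z => (1 / 4 : ℂ) * ∑ j : Fin 4, f (Ups j z)

lemma integrable_of_bc {X : Type*} [MeasurableSpace X] [TopologicalSpace X]
    [OpensMeasurableSpace X] (ν : Measure X) [IsFiniteMeasure ν]
    {f : X → ℂ} (hf : Continuous f) {C : ℝ} (hC : ∀ z, ‖f z‖ ≤ C) :
    Integrable f ν :=
  (BoundedContinuousFunction.ofNormedAddCommGroup f hf C hC).integrable ν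

lemma TOp_cont {f : ℝ × ℝ → ℂ} (hf : Continuous f) : Continuous (TOp f) :=
  continuous_const.mul (continuous_finset_sum _ fun j _ => hf.comp (ups_cont j))

lemma TOp_bound {f : ℝ × ℝ → ℂ} {C : ℝ} (hC : ∀ z, ‖f z‖ ≤ C) :
    ∀ z, ‖TOp f z‖ ≤ C := by
  intro z
  have h0 : (0:ℝ) ≤ C := le_trans (norm_nonneg _) (hC z)
  calc ‖TOp f z‖ = ‖(1/4 : ℂ)‖ * ‖∑ j : Fin 4, f (Ups j z)‖ := norm_mul _ _
    _ ≤ ‖(1/4 : ℂ)‖ * ∑ j : Fin 4, ‖f (Ups j z)‖ := by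
        refine mul_le_mul_of_nonneg_left (norm_sum_le _ _) (norm_nonneg _)
    _ ≤ ‖(1/4 : ℂ)‖ * ∑ j : Fin 4, C := by
        refine mul_le_mul_of_nonneg_left (Finset.sum_le_sum fun j _ => hC _) (norm_nonneg _)
    _ = C := by
        simp [Finset.sum_const]

lemma TOp_iter_cont_bound {f : ℝ × ℝ → ℂ} (hf : Continuous f) {C : ℝ} (hC : ∀ z, ‖f z‖ ≤ C) :
    ∀ n, Continuous (TOp^[n] f) ∧ ∀ z, ‖TOp^[n] f z‖ ≤ C := by
  intro n
  induction n with
  | zero => exact ⟨hf, hC⟩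
  | succ n ih =>
    rw [Function.iterate_succ_apply']
    exact ⟨TOp_cont ih.1, TOp_bound ih.2⟩

lemma TOp_iter_integral {ρ : Measure (ℝ × ℝ)} [IsProbabilityMeasure ρ]
    (hρ : IsInvariant2D ρ) {f : ℝ × ℝ → ℂ} (hf : Continuous f) {C : ℝ}
    (hC : ∀ z, ‖f z‖ ≤ C) : ∀ n, ∫ z, TOp^[n] f z ∂ρ = ∫ z, f z ∂ρ := by
  intro n
  induction n with
  | zero => rfl
  | succ n ih =>
    obtain ⟨hcont, hbd⟩ := TOp_iter_cont_bound hf hC n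
    have key := hρ (TOp^[n] f) hcont ⟨C, hbd⟩
    rw [Function.iterate_succ_apply']
    calc ∫ z, TOp (TOp^[n] f) z ∂ρ
        = ∫ z, (1/4 : ℂ) * ∑ j : Fin 4, TOp^[n] f (Ups j z) ∂ρ := rfl
      _ = (1/4 : ℂ) * ∫ z, ∑ j : Fin 4, TOp^[n] f (Ups j z) ∂ρ := integral_const_mul _ _
      _ = (1/4 : ℂ) * ∑ j : Fin 4, ∫ z, TOp^[n] f (Ups j z) ∂ρ := by
          rw [integral_finset_sum]
          intro j _
          exact integrable_of_bc ρ (hcont.comp (ups_cont j)) (fun z => hbd _)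
      _ = ∫ z, TOp^[n] f z ∂ρ := key.symm
      _ = ∫ z, f z ∂ρ := ih

lemma TOp_iter_est {f : ℝ × ℝ → ℂ} {R δ ε : ℝ} (hR : 1 ≤ R) (hδ : 0 ≤ δ)
    (hub : ∀ a b : ℝ × ℝ, ‖a‖ ≤ R → ‖b‖ ≤ R → dist a b ≤ δ → dist (f a) (f b) ≤ ε) :
    ∀ n, ∀ z z' : ℝ × ℝ, ‖z‖ ≤ R → ‖z'‖ ≤ R → dist z z' ≤ 2 ^ n * δ →
      dist (TOp^[n] f z) (TOp^[n] f z') ≤ ε := by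
  intro n
  induction n with
  | zero => intro z z' hz hz' hd; exact hub z z' hz hz' (by simpa using hd)
  | succ n ih =>
    intro z z' hz hz' hd
    have hε : 0 ≤ ε := le_trans dist_nonneg (hub z z hz hz (by simpa [dist_self] using hδ))
    rw [Function.iterate_succ_apply']
    set f' := TOp^[n] f with hf'
    have key : ∀ j : Fin 4, dist (TOp^[n] f (Ups j z)) (TOp^[n] f (Ups j z')) ≤ ε := by
      intro j
      refine ih (Ups j z) (Ups j z') (ups_norm j z hz hR) (ups_norm j z' hz' hR) ?_
      calc dist (Ups j z) (Ups j z') ≤ dist z z' / 2 := ups_lip j z z'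
        _ ≤ 2 ^ (n+1) * δ / 2 := by linarith
        _ = 2 ^ n * δ := by ring
    calc dist (TOp f' z) (TOp f' z') = ‖TOp f' z - TOp f' z'‖ := dist_eq_norm _ _
      _ = ‖(1/4 : ℂ) * (∑ j : Fin 4, f' (Ups j z) - ∑ j : Fin 4, f' (Ups j z'))‖ := by
          simp only [TOp, mul_sub]
      _ = ‖(1/4 : ℂ)‖ * ‖∑ j : Fin 4, (f' (Ups j z) - f' (Ups j z'))‖ := by
          rw [norm_mul, ← Finset.sum_sub_distrib]
      _ ≤ ‖(1/4 : ℂ)‖ * ∑ j : Fin 4, ‖f' (Ups j z) - f' (Ups j z')‖ :=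
          mul_le_mul_of_nonneg_left (norm_sum_le _ _) (norm_nonneg _)
      _ ≤ ‖(1/4 : ℂ)‖ * ∑ j : Fin 4, ε := by
          refine mul_le_mul_of_nonneg_left (Finset.sum_le_sum fun j _ => ?_) (norm_nonneg _)
          rw [← dist_eq_norm]; exact key j
      _ = ε := by
          simp only [Finset.sum_const, Finset.card_univ, Fintype.card_fin, nsmul_eq_mul]
          rw [show ‖(1/4 : ℂ)‖ = 1/4 by norm_num]
          ring

open Filter in
lemma TOp_iter_pointwise {f : ℝ × ℝ → ℂ} (hf : Continuous f) (z : ℝ × ℝ) :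
    Tendsto (fun n => TOp^[n] f z - TOp^[n] f 0) atTop (nhds 0) := by
  rw [NormedAddCommGroup.tendsto_nhds_zero]
  intro ε hε
  set R : ℝ := max ‖z‖ 1 with hRdef
  have hR : 1 ≤ R := le_max_right _ _
  have hz : ‖z‖ ≤ R := le_max_left _ _
  have h0 : ‖(0 : ℝ × ℝ)‖ ≤ R := by rw [norm_zero]; linarith
  have UC : UniformContinuousOn f (Metric.closedBall 0 R) :=
    (isCompact_closedBall (0 : ℝ × ℝ) R).uniformContinuousOn_of_continuous hf.continuousOn
  rw [Metric.uniformContinuousOn_iff] at UC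
  obtain ⟨δ, hδpos, H⟩ := UC (ε / 2) (by positivity)
  have hub : ∀ a b : ℝ × ℝ, ‖a‖ ≤ R → ‖b‖ ≤ R → dist a b ≤ δ / 2 → dist (f a) (f b) ≤ ε / 2 := by
    intro a b ha hb hab
    refine (H a (by rwa [Metric.mem_closedBall, dist_zero_right]) b
      (by rwa [Metric.mem_closedBall, dist_zero_right]) (lt_of_le_of_lt hab (by linarith))).le
  have est := TOp_iter_est hR (by positivity) hub
  obtain ⟨N, hN⟩ := pow_unbounded_of_one_lt (dist z 0 / (δ / 2)) (one_lt_two (α := ℝ))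
  refine eventually_atTop.2 ⟨N, fun n hn => ?_⟩
  have h2N : (2:ℝ) ^ N ≤ 2 ^ n := pow_le_pow_right₀ (by norm_num) hn
  have hd : dist z (0 : ℝ × ℝ) ≤ 2 ^ n * (δ / 2) := by
    rw [div_lt_iff₀ (by positivity)] at hN
    nlinarith
  calc ‖TOp^[n] f z - TOp^[n] f 0‖ = dist (TOp^[n] f z) (TOp^[n] f 0) := (dist_eq_norm _ _).symm
    _ ≤ ε / 2 := est n z 0 hz h0 hd
    _ < ε := by linarith

open Filter in
lemma TOp_iter_tendsto {ν : Measure (ℝ × ℝ)} [IsProbabilityMeasure ν]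
    (hν : IsInvariant2D ν) {f : ℝ × ℝ → ℂ} (hf : Continuous f) {C : ℝ}
    (hC : ∀ z, ‖f z‖ ≤ C) :
    Tendsto (fun n => TOp^[n] f 0) atTop (nhds (∫ z, f z ∂ν)) := by
  have key : Tendsto (fun n => ∫ z, (TOp^[n] f z - TOp^[n] f 0) ∂ν) atTop
      (nhds (∫ _z, (0 : ℂ) ∂ν)) := by
    refine tendsto_integral_of_dominated_convergence (fun _ => C + C)
      (fun n => ?_) (integrable_const _) (fun n => ae_of_all _ fun z => ?_)
      (ae_of_all _ fun z => TOp_iter_pointwise hf z)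
    · exact ((TOp_iter_cont_bound hf hC n).1.sub continuous_const).aestronglyMeasurable
    · calc ‖TOp^[n] f z - TOp^[n] f 0‖ ≤ ‖TOp^[n] f z‖ + ‖TOp^[n] f 0‖ := norm_sub_le _ _
        _ ≤ C + C := add_le_add ((TOp_iter_cont_bound hf hC n).2 z)
            ((TOp_iter_cont_bound hf hC n).2 0)
  have heq : ∀ n, ∫ z, (TOp^[n] f z - TOp^[n] f 0) ∂ν = ∫ z, f z ∂ν - TOp^[n] f 0 := by
    intro n
    obtain ⟨hcont, hbd⟩ := TOp_iter_cont_bound hf hC n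
    rw [integral_sub (integrable_of_bc ν hcont hbd) (integrable_const _),
      TOp_iter_integral hν hf hC n, integral_const]
    simp
  simp only [heq, integral_zero] at key
  have := (tendsto_const_nhds (x := ∫ z, f z ∂ν) (f := atTop)).sub key
  simpa using this

lemma invariant_integral_eq {ρ σ : Measure (ℝ × ℝ)} [IsProbabilityMeasure ρ]
    [IsProbabilityMeasure σ] (hρ : IsInvariant2D ρ) (hσ : IsInvariant2D σ)
    {f : ℝ × ℝ → ℂ} (hf : Continuous f) {C : ℝ} (hC : ∀ z, ‖f z‖ ≤ C) :
    ∫ z, f z ∂ρ = ∫ z, f z ∂σ :=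
  tendsto_nhds_unique (TOp_iter_tendsto hρ hf hC) (TOp_iter_tendsto hσ hf hC)

lemma integrable_of_bc_real {X : Type*} [MeasurableSpace X] [TopologicalSpace X]
    [OpensMeasurableSpace X] (ν : Measure X) [IsFiniteMeasure ν]
    {f : X → ℝ} (hf : Continuous f) {C : ℝ} (hC : ∀ z, ‖f z‖ ≤ C) :
    Integrable f ν :=
  (BoundedContinuousFunction.ofNormedAddCommGroup f hf C hC).integrable ν

lemma ext_of_bc {X : Type*} [MeasurableSpace X] [TopologicalSpace X]
    [HasOuterApproxClosed X] [BorelSpace X] {μ ν : Measure X}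
    [IsFiniteMeasure μ] [IsFiniteMeasure ν]
    (h : ∀ f : X → ℂ, Continuous f → (∃ C : ℝ, ∀ x, ‖f x‖ ≤ C) →
      ∫ x, f x ∂μ = ∫ x, f x ∂ν) : μ = ν := by
  refine ext_of_forall_lintegral_eq_of_IsFiniteMeasure (fun f => ?_)
  have lip : LipschitzWith 1 (fun a : ℝ≥0 => (a : ℝ)) :=
    LipschitzWith.of_dist_le_mul fun a b => by
      simp [NNReal.dist_eq, Real.dist_eq]
  set F : BoundedContinuousFunction X ℝ := BoundedContinuousFunction.comp _ lip f with hF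
  have hgb : ∀ x, ‖F x‖ ≤ ‖F‖ := fun x => F.norm_coe_le_norm x
  have hcb : ∀ x, ‖((F x : ℝ) : ℂ)‖ ≤ ‖F‖ := by
    intro x; rw [Complex.norm_real]; exact hgb x
  have hint := h (fun x => ((F x : ℝ) : ℂ))
    (Complex.continuous_ofReal.comp F.continuous) ⟨‖F‖, hcb⟩
  have e1 : ∫ x, ((F x : ℝ) : ℂ) ∂μ = ((∫ x, F x ∂μ : ℝ) : ℂ) := integral_ofReal
  have e2 : ∫ x, ((F x : ℝ) : ℂ) ∂ν = ((∫ x, F x ∂ν : ℝ) : ℂ) := integral_ofReal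
  rw [e1, e2] at hint
  have hreal : ∫ x, F x ∂μ = ∫ x, F x ∂ν := Complex.ofReal_inj.mp hint
  have hl1 : ∫⁻ x, (f x : ℝ≥0∞) ∂μ = ENNReal.ofReal (∫ x, F x ∂μ) :=
    lintegral_coe_eq_integral f (F.integrable μ)
  have hl2 : ∫⁻ x, (f x : ℝ≥0∞) ∂ν = ENNReal.ofReal (∫ x, F x ∂ν) :=
    lintegral_coe_eq_integral f (F.integrable ν)
  rw [hl1, hl2, hreal]

lemma mu_two_eq {μ : Measure ℝ} [IsProbabilityMeasure μ]
    (hμ : ∀ f : ℝ → ℂ, Continuous f → (∃ C : ℝ, ∀ x, ‖f x‖ ≤ C) →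
      ∫ x, f x ∂μ = (1 / 2 : ℂ) * (∫ x, f (x / 4) ∂μ + ∫ x, f ((x + 2) / 4) ∂μ)) :
    μ + μ = μ.map (fun x => x / 4) + μ.map (fun x => (x + 2) / 4) := by
  have m0 : Measurable (fun x : ℝ => x / 4) := measurable_id.div_const 4
  have m2 : Measurable (fun x : ℝ => (x + 2) / 4) := (measurable_id.add_const 2).div_const 4
  haveI i0 : IsProbabilityMeasure (μ.map (fun x : ℝ => x / 4)) :=
    Measure.isProbabilityMeasure_map m0.aemeasurable
  haveI i2 : IsProbabilityMeasure (μ.map (fun x : ℝ => (x + 2) / 4)) :=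
    Measure.isProbabilityMeasure_map m2.aemeasurable
  refine ext_of_bc (fun f hf hb => ?_)
  obtain ⟨C, hC⟩ := hb
  have key := hμ f hf ⟨C, hC⟩
  rw [integral_add_measure (integrable_of_bc μ hf hC) (integrable_of_bc μ hf hC),
    integral_add_measure (integrable_of_bc _ hf hC) (integrable_of_bc _ hf hC),
    integral_map m0.aemeasurable hf.aestronglyMeasurable,
    integral_map m2.aemeasurable hf.aestronglyMeasurable]
  linear_combination 2 * key

lemma lam_two_eq :
    (volume.restrict (Icc (0:ℝ) 1)) + (volume.restrict (Icc (0:ℝ) 1)) =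
      (volume.restrict (Icc (0:ℝ) 1)).map (fun y => y / 2) +
        (volume.restrict (Icc (0:ℝ) 1)).map (fun y => (y + 1) / 2) := by
  have m0 : Measurable (fun y : ℝ => y / 2) := measurable_id.div_const 2
  have m1 : Measurable (fun y : ℝ => (y + 1) / 2) := (measurable_id.add_const 1).div_const 2
  have vm0 : Measure.map (fun y : ℝ => y / 2) volume = (2 : ℝ≥0∞) • volume := by
    rw [show (fun y : ℝ => y / 2) = (fun y : ℝ => (2⁻¹ : ℝ) * y) from funext fun y => by ring]
    rw [Real.map_volume_mul_left (by norm_num : (2⁻¹ : ℝ) ≠ 0)]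
    norm_num
  have vm1 : Measure.map (fun y : ℝ => (y + 1) / 2) volume = (2 : ℝ≥0∞) • volume := by
    have madd : Measurable (fun y : ℝ => y + 1) := measurable_add_const 1
    rw [show (fun y : ℝ => (y + 1) / 2) = (fun y : ℝ => y / 2) ∘ (fun y : ℝ => y + 1) from
      funext fun y => rfl]
    rw [← Measure.map_map m0 madd,
      show Measure.map (fun y : ℝ => y + 1) volume = volume from
        map_add_right_eq_self volume 1, vm0]
  have p0 : (fun y : ℝ => y / 2) ⁻¹' (Icc 0 2⁻¹) = Icc 0 1 := by
    ext y
    simp only [mem_preimage, mem_Icc]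
    constructor <;> intro h <;> constructor <;> linarith [h.1, h.2]
  have p1 : (fun y : ℝ => (y + 1) / 2) ⁻¹' (Icc 2⁻¹ 1) = Icc 0 1 := by
    ext y
    simp only [mem_preimage, mem_Icc]
    constructor <;> intro h <;> constructor <;> linarith [h.1, h.2]
  have r0 : (volume.restrict (Icc (0:ℝ) 1)).map (fun y => y / 2) =
      (2 : ℝ≥0∞) • volume.restrict (Icc (0:ℝ) 2⁻¹) := by
    rw [← p0, ← Measure.restrict_map m0 measurableSet_Icc, vm0, Measure.restrict_smul]
  have r1 : (volume.restrict (Icc (0:ℝ) 1)).map (fun y => (y + 1) / 2) =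
      (2 : ℝ≥0∞) • volume.restrict (Icc (2⁻¹:ℝ) 1) := by
    rw [← p1, ← Measure.restrict_map m1 measurableSet_Icc, vm1, Measure.restrict_smul]
  have rsum : volume.restrict (Icc (0:ℝ) 2⁻¹) + volume.restrict (Icc (2⁻¹:ℝ) 1) =
      volume.restrict (Icc (0:ℝ) 1) := by
    rw [← restrict_Ioc_eq_restrict_Icc, ← restrict_Ioc_eq_restrict_Icc,
      ← restrict_Ioc_eq_restrict_Icc,
      ← Measure.restrict_union (Set.Ioc_disjoint_Ioc_of_le le_rfl) measurableSet_Ioc,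
      Set.Ioc_union_Ioc_eq_Ioc (by norm_num : (0:ℝ) ≤ 2⁻¹) (by norm_num : (2⁻¹:ℝ) ≤ 1)]
  rw [r0, r1, ← smul_add, rsum, two_smul]

lemma prod_four_eq {μ : Measure ℝ} [IsProbabilityMeasure μ]
    [IsProbabilityMeasure (volume.restrict (Icc (0:ℝ) 1))]
    (hμ2 : μ + μ = μ.map (fun x => x / 4) + μ.map (fun x => (x + 2) / 4)) :
    μ.prod (volume.restrict (Icc (0:ℝ) 1)) + μ.prod (volume.restrict (Icc (0:ℝ) 1)) +
      μ.prod (volume.restrict (Icc (0:ℝ) 1)) + μ.prod (volume.restrict (Icc (0:ℝ) 1)) =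
    (μ.prod (volume.restrict (Icc (0:ℝ) 1))).map (Ups 0) +
      (μ.prod (volume.restrict (Icc (0:ℝ) 1))).map (Ups 1) +
      (μ.prod (volume.restrict (Icc (0:ℝ) 1))).map (Ups 2) +
      (μ.prod (volume.restrict (Icc (0:ℝ) 1))).map (Ups 3) := by
  set lam : Measure ℝ := volume.restrict (Icc (0:ℝ) 1) with hlam
  have m0 : Measurable (fun x : ℝ => x / 4) := measurable_id.div_const 4
  have m2 : Measurable (fun x : ℝ => (x + 2) / 4) := (measurable_id.add_const 2).div_const 4
  have s0 : Measurable (fun y : ℝ => y / 2) := measurable_id.div_const 2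
  have s1 : Measurable (fun y : ℝ => (y + 1) / 2) := (measurable_id.add_const 1).div_const 2
  haveI : IsProbabilityMeasure (μ.map (fun x : ℝ => x / 4)) :=
    Measure.isProbabilityMeasure_map m0.aemeasurable
  haveI : IsProbabilityMeasure (μ.map (fun x : ℝ => (x + 2) / 4)) :=
    Measure.isProbabilityMeasure_map m2.aemeasurable
  haveI : IsProbabilityMeasure (lam.map (fun y : ℝ => y / 2)) :=
    Measure.isProbabilityMeasure_map s0.aemeasurable
  haveI : IsProbabilityMeasure (lam.map (fun y : ℝ => (y + 1) / 2)) :=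
    Measure.isProbabilityMeasure_map s1.aemeasurable
  have key : (μ + μ).prod (lam + lam) =
      (μ.map (fun x => x / 4) + μ.map (fun x => (x + 2) / 4)).prod
        (lam.map (fun y => y / 2) + lam.map (fun y => (y + 1) / 2)) := by
    rw [← hμ2, hlam, ← lam_two_eq]
  rw [Measure.add_prod, Measure.prod_add, Measure.add_prod, Measure.prod_add,
    Measure.prod_add] at key
  rw [Measure.map_prod_map _ _ m0 s0, Measure.map_prod_map _ _ m0 s1,
    Measure.map_prod_map _ _ m2 s0, Measure.map_prod_map _ _ m2 s1] at key
  have e0 : Prod.map (fun x : ℝ => x / 4) (fun y : ℝ => y / 2) = Ups 0 := rfl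
  have e1 : Prod.map (fun x : ℝ => (x + 2) / 4) (fun y : ℝ => y / 2) = Ups 1 := rfl
  have e2 : Prod.map (fun x : ℝ => x / 4) (fun y : ℝ => (y + 1) / 2) = Ups 2 := rfl
  have e3 : Prod.map (fun x : ℝ => (x + 2) / 4) (fun y : ℝ => (y + 1) / 2) = Ups 3 := rfl
  rw [e0, e1, e2, e3] at key
  calc μ.prod lam + μ.prod lam + μ.prod lam + μ.prod lam
      = μ.prod lam + μ.prod lam + (μ.prod lam + μ.prod lam) := by abel
    _ = (μ.prod lam).map (Ups 0) + (μ.prod lam).map (Ups 2) +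
        ((μ.prod lam).map (Ups 1) + (μ.prod lam).map (Ups 3)) := key
    _ = (μ.prod lam).map (Ups 0) + (μ.prod lam).map (Ups 1) +
        (μ.prod lam).map (Ups 2) + (μ.prod lam).map (Ups 3) := by abel

lemma inv_of_four {ν : Measure (ℝ × ℝ)} [IsProbabilityMeasure ν]
    (h4 : ν + ν + ν + ν = ν.map (Ups 0) + ν.map (Ups 1) + ν.map (Ups 2) + ν.map (Ups 3)) :
    IsInvariant2D ν := by
  intro f hf hb
  obtain ⟨C, hC⟩ := hb
  haveI i0 : IsProbabilityMeasure (ν.map (Ups 0)) :=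
    Measure.isProbabilityMeasure_map (ups_meas 0).aemeasurable
  haveI i1 : IsProbabilityMeasure (ν.map (Ups 1)) :=
    Measure.isProbabilityMeasure_map (ups_meas 1).aemeasurable
  haveI i2 : IsProbabilityMeasure (ν.map (Ups 2)) :=
    Measure.isProbabilityMeasure_map (ups_meas 2).aemeasurable
  haveI i3 : IsProbabilityMeasure (ν.map (Ups 3)) :=
    Measure.isProbabilityMeasure_map (ups_meas 3).aemeasurable
  have hI : Integrable f ν := integrable_of_bc ν hf hC
  have hL : ∫ z, f z ∂(ν + ν + ν + ν) = ∫ z, f z ∂ν + ∫ z, f z ∂ν + ∫ z, f z ∂ν + ∫ z, f z ∂ν := by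
    rw [integral_add_measure ((hI.add_measure hI).add_measure hI) hI,
      integral_add_measure (hI.add_measure hI) hI, integral_add_measure hI hI]
  have hR : ∫ z, f z ∂(ν.map (Ups 0) + ν.map (Ups 1) + ν.map (Ups 2) + ν.map (Ups 3)) =
      ∫ z, f (Ups 0 z) ∂ν + ∫ z, f (Ups 1 z) ∂ν + ∫ z, f (Ups 2 z) ∂ν + ∫ z, f (Ups 3 z) ∂ν := by
    have I0 : Integrable f (ν.map (Ups 0)) := integrable_of_bc _ hf hC
    have I1 : Integrable f (ν.map (Ups 1)) := integrable_of_bc _ hf hC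
    have I2 : Integrable f (ν.map (Ups 2)) := integrable_of_bc _ hf hC
    have I3 : Integrable f (ν.map (Ups 3)) := integrable_of_bc _ hf hC
    rw [integral_add_measure ((I0.add_measure I1).add_measure I2) I3,
      integral_add_measure (I0.add_measure I1) I2, integral_add_measure I0 I1,
      integral_map (ups_meas 0).aemeasurable hf.aestronglyMeasurable,
      integral_map (ups_meas 1).aemeasurable hf.aestronglyMeasurable,
      integral_map (ups_meas 2).aemeasurable hf.aestronglyMeasurable,
      integral_map (ups_meas 3).aemeasurable hf.aestronglyMeasurable]
  have key : ∫ z, f z ∂ν + ∫ z, f z ∂ν + ∫ z, f z ∂ν + ∫ z, f z ∂ν =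
      ∫ z, f (Ups 0 z) ∂ν + ∫ z, f (Ups 1 z) ∂ν + ∫ z, f (Ups 2 z) ∂ν + ∫ z, f (Ups 3 z) ∂ν := by
    rw [← hL, ← hR, h4]
  rw [Fin.sum_univ_four]
  linear_combination (1/4 : ℂ) * key

/-- If μ₄ is the (unique) probability measure on ℝ invariant under
τ₀(x)=x/4, τ₂(x)=(x+2)/4 with equal weights 1/2, and λ is Lebesgue measure restricted
to [0,1], then μ₄ × λ is the unique invariant probability measure of the IFS `Ups`
with equal weights 1/4. -/
theorem prod_measure_invariant_unique
    (μ₄ : Measure ℝ) [IsProbabilityMeasure μ₄]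
    (hμ₄ : ∀ f : ℝ → ℂ, Continuous f → (∃ C : ℝ, ∀ x, ‖f x‖ ≤ C) →
      ∫ x, f x ∂μ₄ =
        (1 / 2 : ℂ) * (∫ x, f (x / 4) ∂μ₄ + ∫ x, f ((x + 2) / 4) ∂μ₄)) :
    IsInvariant2D (μ₄.prod (volume.restrict (Icc (0 : ℝ) 1))) ∧
      ∀ ρ : Measure (ℝ × ℝ), IsProbabilityMeasure ρ → IsInvariant2D ρ →
        ρ = μ₄.prod (volume.restrict (Icc (0 : ℝ) 1)) := by
  haveI hlamP : IsProbabilityMeasure (volume.restrict (Icc (0:ℝ) 1)) := by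
    constructor
    rw [Measure.restrict_apply_univ, Real.volume_Icc]
    norm_num
  have hinv : IsInvariant2D (μ₄.prod (volume.restrict (Icc (0 : ℝ) 1))) :=
    inv_of_four (prod_four_eq (mu_two_eq hμ₄))
  refine ⟨hinv, fun ρ hρP hρinv => ?_⟩
  haveI := hρP
  refine ext_of_bc (fun f hf hb => ?_)
  obtain ⟨C, hC⟩ := hb
  exact invariant_integral_eq hρinv hinv hf hC
end

section
/- Let (m_j)_{j=0}^{3} be measurable functions on C_4 × [0,1] such that the 4×4 matrix M(x,y) with entries M_{jk}(x,y) = m_j(Υ_k(x,y)) is unitary for μ_4×λ-a.e. (x,y). Then each operator S_j on L²(μ_4 × λ) defined by (S_j f)(x,y) = 2 m_j(x,y) f(R(x,y)), where R(x,y) = (4x mod 1, 2y mod 1), is an isometry. -/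
open MeasureTheory Set
open scoped ENNReal NNReal

/-- The common left inverse `R(x,y) = (4x mod 1, 2y mod 1)` of the maps `Ups j`. -/
noncomputable def Rmap : ℝ × ℝ → ℝ × ℝ :=
  fun z => (Int.fract (4 * z.1), Int.fract (2 * z.2))

lemma measurable_Ups (k : Fin 4) : Measurable (Ups k) := by
  fin_cases k <;>
    exact Measurable.prod (by simp only [Ups]; fun_prop) (by simp only [Ups]; fun_prop)

lemma lint_half (h : ℝ → ℝ≥0∞) (hh : Measurable h) (a : ℝ) :
    ∫⁻ y in Icc (0:ℝ) 1, h ((y + a) / 2) =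
      2 * ∫⁻ u in Icc (a/2) ((a+1)/2), h u := by
  have hT : Measurable (fun y : ℝ => (y + a) / 2) := by fun_prop
  have hpre : (fun y : ℝ => (y + a) / 2) ⁻¹' Icc (a/2) ((a+1)/2) = Icc (0:ℝ) 1 := by
    ext y
    simp only [mem_preimage, mem_Icc]
    constructor <;> intro ⟨h1, h2⟩ <;> constructor <;> linarith
  have hmap : Measure.map (fun y : ℝ => (y + a) / 2) volume = (2 : ℝ≥0∞) • volume := by
    have : (fun y : ℝ => (y + a) / 2) = (fun y : ℝ => (1/2 : ℝ) * y) ∘ (fun y : ℝ => y + a) := by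
      ext y; simp; ring
    rw [this, ← Measure.map_map (by fun_prop) (by fun_prop),
      map_add_right_eq_self volume a, Real.map_volume_mul_left (by norm_num : (1/2:ℝ) ≠ 0)]
    norm_num
  have key : Measure.map (fun y : ℝ => (y + a) / 2) (volume.restrict (Icc (0:ℝ) 1)) =
      (2 : ℝ≥0∞) • (volume.restrict (Icc (a/2) ((a+1)/2))) := by
    rw [← hpre, ← Measure.restrict_map hT measurableSet_Icc, hmap, Measure.restrict_smul]
  calc ∫⁻ y in Icc (0:ℝ) 1, h ((y + a) / 2)
      = ∫⁻ u, h u ∂(Measure.map (fun y : ℝ => (y + a) / 2) (volume.restrict (Icc (0:ℝ) 1))) :=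
        (lintegral_map hh hT).symm
    _ = 2 * ∫⁻ u in Icc (a/2) ((a+1)/2), h u := by rw [key, lintegral_smul_measure, smul_eq_mul]

lemma lam_inv (h : ℝ → ℝ≥0∞) (hh : Measurable h) :
    ∫⁻ y in Icc (0:ℝ) 1, h y =
      (1/2) * ((∫⁻ y in Icc (0:ℝ) 1, h (y / 2)) + ∫⁻ y in Icc (0:ℝ) 1, h ((y + 1) / 2)) := by
  have h0 : (∫⁻ y in Icc (0:ℝ) 1, h (y / 2)) = 2 * ∫⁻ u in Icc (0:ℝ) (1/2), h u := by
    have := lint_half h hh 0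
    simpa using this
  have h1 : (∫⁻ y in Icc (0:ℝ) 1, h ((y + 1) / 2)) = 2 * ∫⁻ u in Icc (1/2 : ℝ) 1, h u := by
    have := lint_half h hh 1
    norm_num at this
    exact this
  rw [h0, h1, mul_add, ← mul_assoc, ← mul_assoc, one_div,
    ENNReal.inv_mul_cancel (by norm_num) (by norm_num), one_mul, one_mul]
  have hsplit : Icc (0:ℝ) 1 = Ico (0:ℝ) (1/2) ∪ Icc (1/2 : ℝ) 1 := by
    ext y; simp only [mem_Icc, mem_Ico, mem_union]
    constructor
    · rintro ⟨h1, h2⟩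
      rcases lt_or_ge y (1/2) with h3 | h3
      · exact Or.inl ⟨h1, h3⟩
      · exact Or.inr ⟨h3, h2⟩
    · rintro (⟨h1, h2⟩ | ⟨h1, h2⟩) <;> constructor <;> linarith
  rw [hsplit, lintegral_union measurableSet_Icc (by
    rw [Set.disjoint_left]; rintro y ⟨_, hy2⟩ ⟨hy3, _⟩; linarith),
    restrict_Ico_eq_restrict_Icc]

lemma prod_inv (μ₄ : Measure ℝ) [IsProbabilityMeasure μ₄]
    (hμ₄ : ∀ f : ℝ → ℝ≥0∞, Measurable f →
      ∫⁻ x, f x ∂μ₄ =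
        (1 / 2) * (∫⁻ x, f (x / 4) ∂μ₄ + ∫⁻ x, f ((x + 2) / 4) ∂μ₄))
    (g : ℝ × ℝ → ℝ≥0∞) (hg : Measurable g) :
    ∫⁻ z, g z ∂(μ₄.prod (volume.restrict (Icc (0:ℝ) 1))) =
      (1/4) * ∑ k : Fin 4, ∫⁻ z, g (Ups k z) ∂(μ₄.prod (volume.restrict (Icc (0:ℝ) 1))) := by
  set ν := μ₄.prod (volume.restrict (Icc (0:ℝ) 1)) with hνdef
  have hswap : ∀ (G : ℝ × ℝ → ℝ≥0∞), Measurable G →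
      ∫⁻ z, G z ∂ν = ∫⁻ x, (∫⁻ y in Icc (0:ℝ) 1, G (x, y)) ∂μ₄ := fun G hG =>
    lintegral_prod _ hG.aemeasurable
  have hinner : ∀ (G : ℝ × ℝ → ℝ≥0∞), Measurable G → ∀ x : ℝ,
      (∫⁻ y in Icc (0:ℝ) 1, G (x, y)) =
        (1/2) * ((∫⁻ y in Icc (0:ℝ) 1, G (x, y / 2)) +
          ∫⁻ y in Icc (0:ℝ) 1, G (x, (y + 1) / 2)) := fun G hG x =>
    lam_inv (fun y => G (x, y)) (hG.comp measurable_prodMk_left)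
  -- the four composed functions
  have hgk : ∀ k : Fin 4, Measurable (fun z => g (Ups k z)) := fun k =>
    hg.comp (measurable_Ups k)
  have hJ : ∀ k : Fin 4, ∫⁻ z, g (Ups k z) ∂ν =
      ∫⁻ x, (∫⁻ y in Icc (0:ℝ) 1, g (Ups k (x, y))) ∂μ₄ := fun k => hswap _ (hgk k)
  have hmeasI : ∀ k : Fin 4, Measurable fun x => ∫⁻ y in Icc (0:ℝ) 1, g (Ups k (x, y)) :=
    fun k => (hgk k).lintegral_prod_right'
  have step1 : ∫⁻ z, g z ∂ν =
      (1/2) * ((∫⁻ x, (∫⁻ y in Icc (0:ℝ) 1, g (x/4, y)) ∂μ₄) +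
        (∫⁻ x, (∫⁻ y in Icc (0:ℝ) 1, g ((x+2)/4, y)) ∂μ₄)) := by
    rw [hswap g hg]
    exact hμ₄ _ hg.lintegral_prod_right'
  have eA : (∫⁻ x, (∫⁻ y in Icc (0:ℝ) 1, g (x/4, y)) ∂μ₄) =
      (1/2) * ((∫⁻ z, g (Ups 0 z) ∂ν) + ∫⁻ z, g (Ups 2 z) ∂ν) := by
    rw [hJ 0, hJ 2]
    calc (∫⁻ x, (∫⁻ y in Icc (0:ℝ) 1, g (x/4, y)) ∂μ₄)
        = ∫⁻ x, (1/2) * ((∫⁻ y in Icc (0:ℝ) 1, g (Ups 0 (x, y))) +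
            ∫⁻ y in Icc (0:ℝ) 1, g (Ups 2 (x, y))) ∂μ₄ :=
          lintegral_congr fun x => hinner g hg (x/4)
      _ = (1/2) * ((∫⁻ x, (∫⁻ y in Icc (0:ℝ) 1, g (Ups 0 (x, y))) ∂μ₄) +
            ∫⁻ x, (∫⁻ y in Icc (0:ℝ) 1, g (Ups 2 (x, y))) ∂μ₄) := by
          rw [lintegral_const_mul _ (show Measurable fun x => (∫⁻ y in Icc (0:ℝ) 1, g (Ups 0 (x, y))) + ∫⁻ y in Icc (0:ℝ) 1, g (Ups 2 (x, y)) from (hmeasI 0).add (hmeasI 2)), lintegral_add_left (hmeasI 0)]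
  have eB : ((∫⁻ x, (∫⁻ y in Icc (0:ℝ) 1, g ((x+2)/4, y)) ∂μ₄)) =
      (1/2) * ((∫⁻ z, g (Ups 1 z) ∂ν) + ∫⁻ z, g (Ups 3 z) ∂ν) := by
    rw [hJ 1, hJ 3]
    calc ((∫⁻ x, (∫⁻ y in Icc (0:ℝ) 1, g ((x+2)/4, y)) ∂μ₄))
        = ∫⁻ x, (1/2) * ((∫⁻ y in Icc (0:ℝ) 1, g (Ups 1 (x, y))) +
            ∫⁻ y in Icc (0:ℝ) 1, g (Ups 3 (x, y))) ∂μ₄ :=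
          lintegral_congr fun x => hinner g hg ((x+2)/4)
      _ = (1/2) * ((∫⁻ x, (∫⁻ y in Icc (0:ℝ) 1, g (Ups 1 (x, y))) ∂μ₄) +
            ∫⁻ x, (∫⁻ y in Icc (0:ℝ) 1, g (Ups 3 (x, y))) ∂μ₄) := by
          rw [lintegral_const_mul _ (show Measurable fun x => (∫⁻ y in Icc (0:ℝ) 1, g (Ups 1 (x, y))) + ∫⁻ y in Icc (0:ℝ) 1, g (Ups 3 (x, y)) from (hmeasI 1).add (hmeasI 3)), lintegral_add_left (hmeasI 1)]
  rw [step1, eA, eB, Fin.sum_univ_four]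
  have h24 : (1/2 : ℝ≥0∞) * (1/2) = 1/4 := by
    simp only [one_div]
    rw [← ENNReal.mul_inv (Or.inl (by norm_num)) (Or.inl (by norm_num))]; norm_num
  rw [← mul_add, ← mul_assoc, h24]
  ring_nf

/-- if the matrix `M(x,y) = (m_j(Υ_k(x,y)))_{jk}` is unitary a.e. with
respect to `ν = μ₄ × λ`, then each operator `S_j f = 2 m_j ⋅ (f ∘ R)` is an isometry
of `L²(μ₄ × λ)`: it preserves the L²-norm. -/
theorem Sj_isometry
    (μ₄ : Measure ℝ) [IsProbabilityMeasure μ₄]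
    (hμ₄ : ∀ f : ℝ → ℝ≥0∞, Measurable f →
      ∫⁻ x, f x ∂μ₄ =
        (1 / 2) * (∫⁻ x, f (x / 4) ∂μ₄ + ∫⁻ x, f ((x + 2) / 4) ∂μ₄))
    (hsupp : μ₄ (Icc (0 : ℝ) 1)ᶜ = 0)
    (m : Fin 4 → ℝ × ℝ → ℂ) (hm : ∀ j, Measurable (m j))
    (hM : ∀ᵐ z ∂(μ₄.prod (volume.restrict (Icc (0 : ℝ) 1))),
      (Matrix.of fun j k : Fin 4 => m j (Ups k z)) ∈ Matrix.unitaryGroup (Fin 4) ℂ)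
    (j : Fin 4) (f : ℝ × ℝ → ℂ) (hf : Measurable f) :
    eLpNorm (fun z => 2 * m j z * f (Rmap z)) 2
        (μ₄.prod (volume.restrict (Icc (0 : ℝ) 1))) =
      eLpNorm f 2 (μ₄.prod (volume.restrict (Icc (0 : ℝ) 1))) := by
  set ν := μ₄.prod (volume.restrict (Icc (0:ℝ) 1)) with hνdef
  -- `μ₄` gives no mass to `{1}`
  have hμ1 : μ₄ ({1} : Set ℝ) = 0 := by
    set g : ℝ → ℝ≥0∞ := ({1} : Set ℝ).indicator (fun _ => 1) with hgdef
    have hind := hμ₄ g (measurable_const.indicator (measurableSet_singleton 1))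
    have l1 : ∫⁻ x, g x ∂μ₄ = μ₄ {1} := lintegral_indicator_one (measurableSet_singleton 1)
    have l2 : ∫⁻ x, g (x/4) ∂μ₄ = μ₄ {4} := by
      have e : (fun x : ℝ => g (x/4)) = ({4} : Set ℝ).indicator (fun _ => 1) := by
        funext x
        by_cases h : x = 4
        · subst h; norm_num [hgdef, Set.indicator]
        · rw [hgdef, Set.indicator_of_notMem (by
            simp only [mem_singleton_iff]; intro hx; apply h; linarith),
            Set.indicator_of_notMem (by simp [h])]
      rw [e]; exact lintegral_indicator_one (measurableSet_singleton 4)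
    have l3 : ∫⁻ x, g ((x+2)/4) ∂μ₄ = μ₄ {2} := by
      have e : (fun x : ℝ => g ((x+2)/4)) = ({2} : Set ℝ).indicator (fun _ => 1) := by
        funext x
        by_cases h : x = 2
        · subst h; norm_num [hgdef, Set.indicator]
        · rw [hgdef, Set.indicator_of_notMem (by
            simp only [mem_singleton_iff]; intro hx; apply h; linarith),
            Set.indicator_of_notMem (by simp [h])]
      rw [e]; exact lintegral_indicator_one (measurableSet_singleton 2)
    rw [l1, l2, l3] at hind
    have h4 : μ₄ ({4} : Set ℝ) = 0 := measure_mono_null (by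
      intro x hx; simp only [mem_singleton_iff] at hx; subst hx
      simp only [mem_compl_iff, mem_Icc]; intro ⟨_, h⟩; norm_num at h) hsupp
    have h2 : μ₄ ({2} : Set ℝ) = 0 := measure_mono_null (by
      intro x hx; simp only [mem_singleton_iff] at hx; subst hx
      simp only [mem_compl_iff, mem_Icc]; intro ⟨_, h⟩; norm_num at h) hsupp
    rw [h4, h2] at hind; simpa using hind
  -- a.e. every point lies in `Ico 0 1 × Ico 0 1`
  have hμIco : μ₄ (Ico (0:ℝ) 1)ᶜ = 0 := by
    refine measure_mono_null ?_ (measure_union_null hsupp hμ1)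
    intro x hx
    simp only [mem_compl_iff, mem_Ico, not_and_or, not_le, not_lt] at hx
    simp only [mem_union, mem_compl_iff, mem_Icc, mem_singleton_iff, not_and_or, not_le]
    rcases hx with h | h
    · exact Or.inl (Or.inl h)
    · rcases eq_or_lt_of_le h with h' | h'
      · exact Or.inr h'.symm
      · exact Or.inl (Or.inr h')
  have hlIco : (volume.restrict (Icc (0:ℝ) 1)) (Ico (0:ℝ) 1)ᶜ = 0 := by
    rw [Measure.restrict_apply measurableSet_Ico.compl]
    refine measure_mono_null ?_ (measure_singleton (1:ℝ))
    rintro x ⟨hx1, hx2⟩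
    simp only [mem_compl_iff, mem_Ico, not_and_or, not_le, not_lt] at hx1
    simp only [mem_Icc] at hx2
    simp only [mem_singleton_iff]
    rcases hx1 with h | h
    · linarith [hx2.1]
    · linarith [hx2.2]
  have hν0 : ν ((Ico (0:ℝ) 1 ×ˢ Ico (0:ℝ) 1)ᶜ) = 0 := by
    have hsub2 : (Ico (0:ℝ) 1 ×ˢ Ico (0:ℝ) 1)ᶜ ⊆
        ((Ico (0:ℝ) 1)ᶜ ×ˢ (univ : Set ℝ)) ∪ ((univ : Set ℝ) ×ˢ (Ico (0:ℝ) 1)ᶜ) := by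
      intro z hz
      simp only [mem_compl_iff, mem_prod, mem_union, mem_univ, and_true, true_and,
        not_and_or] at *
      tauto
    refine measure_mono_null hsub2 (measure_union_null ?_ ?_)
    · rw [hνdef, Measure.prod_prod, hμIco, zero_mul]
    · rw [hνdef, Measure.prod_prod, hlIco, mul_zero]
  have hcoord : ∀ᵐ z ∂ν, z ∈ Ico (0:ℝ) 1 ×ˢ Ico (0:ℝ) 1 := by
    rw [ae_iff]
    exact measure_mono_null (fun z hz => hz) hν0
  have hRU : ∀ᵐ z ∂ν, ∀ k : Fin 4, Rmap (Ups k z) = z := by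
    filter_upwards [hcoord] with z hz
    obtain ⟨⟨h10, h11⟩, h20, h21⟩ := hz
    have f1 : Int.fract z.1 = z.1 := Int.fract_eq_self.2 ⟨h10, h11⟩
    have f2 : Int.fract z.2 = z.2 := Int.fract_eq_self.2 ⟨h20, h21⟩
    have f3 : Int.fract (z.1 + 2) = z.1 := by
      rw [show (z.1 + 2 : ℝ) = z.1 + ((2:ℤ):ℝ) by norm_num, Int.fract_add_intCast]; exact f1
    have f4 : Int.fract (z.2 + 1) = z.2 := by
      rw [show (z.2 + 1 : ℝ) = z.2 + ((1:ℤ):ℝ) by norm_num, Int.fract_add_intCast]; exact f2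
    intro k
    fin_cases k
    · show (Int.fract (4 * (z.1/4)), Int.fract (2 * (z.2/2))) = z
      rw [show (4:ℝ) * (z.1/4) = z.1 by ring, show (2:ℝ) * (z.2/2) = z.2 by ring, f1, f2]
    · show (Int.fract (4 * ((z.1+2)/4)), Int.fract (2 * (z.2/2))) = z
      rw [show (4:ℝ) * ((z.1+2)/4) = z.1 + 2 by ring, show (2:ℝ) * (z.2/2) = z.2 by ring,
        f3, f2]
    · show (Int.fract (4 * (z.1/4)), Int.fract (2 * ((z.2+1)/2))) = z
      rw [show (4:ℝ) * (z.1/4) = z.1 by ring, show (2:ℝ) * ((z.2+1)/2) = z.2 + 1 by ring,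
        f1, f4]
    · show (Int.fract (4 * ((z.1+2)/4)), Int.fract (2 * ((z.2+1)/2))) = z
      rw [show (4:ℝ) * ((z.1+2)/4) = z.1 + 2 by ring,
        show (2:ℝ) * ((z.2+1)/2) = z.2 + 1 by ring, f3, f4]
  -- the rows of the unitary matrix have norm one
  have hsum : ∀ᵐ z ∂ν, ∑ k : Fin 4, (‖m j (Ups k z)‖₊ : ℝ≥0∞)^2 = 1 := by
    filter_upwards [hM] with z hz
    rw [Matrix.mem_unitaryGroup_iff] at hz
    have h := congrFun (congrFun hz j) j
    rw [Matrix.mul_apply, Matrix.one_apply_eq] at h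
    simp only [Matrix.star_apply, Matrix.of_apply, Complex.star_def, Complex.mul_conj] at h
    have h' : ∑ k : Fin 4, Complex.normSq (m j (Ups k z)) = 1 := by exact_mod_cast h
    calc ∑ k : Fin 4, (‖m j (Ups k z)‖₊ : ℝ≥0∞)^2
        = ∑ k : Fin 4, ENNReal.ofReal (Complex.normSq (m j (Ups k z))) := by
          refine Finset.sum_congr rfl fun k _ => ?_
          rw [← enorm_eq_nnnorm, ← ofReal_norm, ← ENNReal.ofReal_pow (norm_nonneg _)]
          congr 1
          rw [Complex.sq_norm]
      _ = ENNReal.ofReal (∑ k : Fin 4, Complex.normSq (m j (Ups k z))) :=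
          (ENNReal.ofReal_sum_of_nonneg (fun k _ => Complex.normSq_nonneg _)).symm
      _ = 1 := by rw [h']; exact ENNReal.ofReal_one
  -- measurability facts
  have hRm : Measurable Rmap := by
    refine Measurable.prod ?_ ?_ <;> · simp only [Rmap]; exact Measurable.fract (by fun_prop)
  have hfR : Measurable fun z => f (Rmap z) := hf.comp hRm
  have hmk : ∀ k : Fin 4, Measurable fun z : ℝ × ℝ => (‖m j (Ups k z)‖₊ : ℝ≥0∞)^2 :=
    fun k => (((hm j).comp (measurable_Ups k)).enorm).pow_const 2
  have hgmeas : Measurable fun z : ℝ × ℝ =>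
      4 * (‖m j z‖₊ : ℝ≥0∞)^2 * (‖f (Rmap z)‖₊ : ℝ≥0∞)^2 :=
    (measurable_const.mul (((hm j).enorm).pow_const 2)).mul ((hfR.enorm).pow_const 2)
  -- reduce to the lintegral of the square
  rw [eLpNorm_eq_lintegral_rpow_enorm_toReal (by norm_num) (by norm_num),
    eLpNorm_eq_lintegral_rpow_enorm_toReal (by norm_num) (by norm_num)]
  simp only [ENNReal.toReal_ofNat, ENNReal.rpow_two, enorm_eq_nnnorm]
  congr 1
  have halg : ∀ z : ℝ × ℝ, (‖2 * m j z * f (Rmap z)‖₊ : ℝ≥0∞)^2 =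
      4 * (‖m j z‖₊ : ℝ≥0∞)^2 * (‖f (Rmap z)‖₊ : ℝ≥0∞)^2 := by
    intro z
    rw [nnnorm_mul, nnnorm_mul, ENNReal.coe_mul, ENNReal.coe_mul, mul_pow, mul_pow]
    congr 2
    rw [show ‖(2:ℂ)‖₊ = 2 by simp]
    norm_num
  rw [lintegral_congr halg, prod_inv μ₄ hμ₄ _ hgmeas]
  have hterm : ∀ k : Fin 4,
      (∫⁻ z, 4 * (‖m j (Ups k z)‖₊ : ℝ≥0∞)^2 * (‖f (Rmap (Ups k z))‖₊ : ℝ≥0∞)^2 ∂ν)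
        = ∫⁻ z, 4 * (‖m j (Ups k z)‖₊ : ℝ≥0∞)^2 * (‖f z‖₊ : ℝ≥0∞)^2 ∂ν := fun k =>
    lintegral_congr_ae (hRU.mono fun z hz => by simp only [hz k])
  have hsum4 : ∑ k : Fin 4,
      (∫⁻ z, 4 * (‖m j (Ups k z)‖₊ : ℝ≥0∞)^2 * (‖f (Rmap (Ups k z))‖₊ : ℝ≥0∞)^2 ∂ν)
        = 4 * ∫⁻ z, (‖f z‖₊ : ℝ≥0∞)^2 ∂ν := by
    rw [Finset.sum_congr rfl fun k _ => hterm k,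
      ← lintegral_finset_sum _ (fun k _ => show Measurable fun z => 4 * (‖m j (Ups k z)‖₊ : ℝ≥0∞)^2 * (‖f z‖₊ : ℝ≥0∞)^2 from (measurable_const.mul (hmk k)).mul
        ((hf.enorm).pow_const 2)), ← lintegral_const_mul 4 (show Measurable fun z => (‖f z‖₊ : ℝ≥0∞)^2 from (hf.enorm).pow_const 2)]
    refine lintegral_congr_ae (hsum.mono fun z hz => ?_)
    calc ∑ k : Fin 4, 4 * (‖m j (Ups k z)‖₊ : ℝ≥0∞)^2 * (‖f z‖₊ : ℝ≥0∞)^2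
        = (4 * (‖f z‖₊ : ℝ≥0∞)^2) * ∑ k : Fin 4, (‖m j (Ups k z)‖₊ : ℝ≥0∞)^2 := by
          rw [Finset.mul_sum]; exact Finset.sum_congr rfl fun k _ => by ring
      _ = 4 * (‖f z‖₊ : ℝ≥0∞)^2 := by rw [hz, mul_one]
  calc (1/4 : ℝ≥0∞) * ∑ k : Fin 4,
      (∫⁻ z, 4 * (‖m j (Ups k z)‖₊ : ℝ≥0∞)^2 * (‖f (Rmap (Ups k z))‖₊ : ℝ≥0∞)^2 ∂ν)
      = (1/4 : ℝ≥0∞) * (4 * ∫⁻ z, (‖f z‖₊ : ℝ≥0∞)^2 ∂ν) := by rw [hsum4]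
    _ = ∫⁻ z, (‖f z‖₊ : ℝ≥0∞)^2 ∂ν := by
        rw [← mul_assoc, one_div, ENNReal.inv_mul_cancel (by norm_num) (by norm_num), one_mul]
end

section
/- Under the hypotheses of the preceding setup, the isometries S_0, S_1, S_2, S_3 satisfy the Cuntz relations: S_j* S_k = δ_{jk} I and Σ_{k=0}^{3} S_k S_k* = I, giving a representation of the Cuntz algebra O_4 on L²(μ_4 × λ). -/
open MeasureTheory Set
open scoped ENNReal NNReal ComplexConjugate

/-- The operator `S_j f = 2 m_j ⋅ (f ∘ R)` at the level of functions. -/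
noncomputable def Sop (m : Fin 4 → ℝ × ℝ → ℂ) (j : Fin 4) (f : ℝ × ℝ → ℂ) :
    ℝ × ℝ → ℂ :=
  fun z => 2 * m j z * f (Rmap z)

/-- The adjoint operator `S_j* f = (1/2) Σ_k conj(m_j ∘ Υ_k) ⋅ (f ∘ Υ_k)` at the level
of functions. -/
noncomputable def Sadj (m : Fin 4 → ℝ × ℝ → ℂ) (j : Fin 4) (f : ℝ × ℝ → ℂ) :
    ℝ × ℝ → ℂ :=
  fun z => (1 / 2 : ℂ) * ∑ k : Fin 4, conj (m j (Ups k z)) * f (Ups k z)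

/-- Scaled-shift self-similarity implies invariance under `x ↦ fract (a x)`. -/
lemma inv_gen (μ : Measure ℝ) (a : ℝ) (n : ℤ) (ha : a ≠ 0)
    (h : ∀ f : ℝ → ℝ≥0∞, Measurable f →
      ∫⁻ x, f x ∂μ = (1 / 2) * (∫⁻ x, f (x / a) ∂μ + ∫⁻ x, f ((x + n) / a) ∂μ))
    (h01 : ∀ᵐ x ∂μ, x ∈ Ico (0:ℝ) 1) :
    ∀ f : ℝ → ℝ≥0∞, Measurable f →
      ∫⁻ x, f (Int.fract (a * x)) ∂μ = ∫⁻ x, f x ∂μ := by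
  intro f hf
  have hg : Measurable fun x => f (Int.fract (a * x)) :=
    hf.comp (measurable_id.const_mul a).fract
  have key := h _ hg
  have e1 : ∀ x : ℝ, a * (x / a) = x := fun x => by field_simp
  have e2 : ∀ x : ℝ, a * ((x + n) / a) = x + n := fun x => by field_simp
  have hI : ∫⁻ x, f (Int.fract x) ∂μ = ∫⁻ x, f x ∂μ := by
    refine lintegral_congr_ae (h01.mono fun x hx => ?_)
    show f (Int.fract x) = f x
    rw [Int.fract_eq_self.2 ⟨hx.1, hx.2⟩]
  simp only [e1, e2, Int.fract_add_intCast] at key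
  rw [key, hI, ← two_mul, ← mul_assoc,
    show (1 / 2 : ℝ≥0∞) * 2 = 1 by
      rw [one_div]; exact ENNReal.inv_mul_cancel (by norm_num) (by norm_num), one_mul]

lemma scale_half (F : ℝ → ℝ≥0∞) (hF : Measurable F) :
    ∫⁻ y, F ((1/2) * y) = 2 * ∫⁻ y, F y := by
  have hmap := Real.map_volume_mul_left (a := (1/2 : ℝ)) (by norm_num)
  have := lintegral_map hF (measurable_const_mul (1/2 : ℝ)) (μ := volume)
  rw [hmap, lintegral_smul_measure] at this
  rw [← this]
  norm_num

lemma leb_selfsim : ∀ g : ℝ → ℝ≥0∞, Measurable g →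
    ∫⁻ y in Icc (0:ℝ) 1, g y =
      (1/2) * ((∫⁻ y in Icc (0:ℝ) 1, g (y/2)) + ∫⁻ y in Icc (0:ℝ) 1, g ((y+1)/2)) := by
  intro g hg
  have hA : ∫⁻ y in Icc (0:ℝ) 1, g (y/2) = 2 * ∫⁻ y in Icc (0:ℝ) (1/2), g y := by
    rw [← lintegral_indicator measurableSet_Icc, ← lintegral_indicator measurableSet_Icc,
      ← scale_half _ (hg.indicator measurableSet_Icc)]
    refine lintegral_congr fun y => ?_
    have mem : (1/2)*y ∈ Icc (0:ℝ) (1/2) ↔ y ∈ Icc (0:ℝ) 1 := by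
      simp only [mem_Icc]; constructor <;> rintro ⟨h1, h2⟩ <;> constructor <;> linarith
    simp only [indicator_apply, mem]
    have : (1/2 : ℝ) * y = y / 2 := by ring
    rw [this]
  have hB : ∫⁻ y in Icc (0:ℝ) 1, g ((y+1)/2) = 2 * ∫⁻ y in Icc (1/2:ℝ) 1, g y := by
    rw [← lintegral_indicator measurableSet_Icc, ← lintegral_indicator measurableSet_Icc,
      ← scale_half _ (hg.indicator measurableSet_Icc),
      ← lintegral_add_right_eq_self (fun t => (Icc (1/2:ℝ) 1).indicator g ((1/2) * t)) 1]
    refine lintegral_congr fun y => ?_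
    have mem : (1/2)*(y+1) ∈ Icc (1/2:ℝ) 1 ↔ y ∈ Icc (0:ℝ) 1 := by
      simp only [mem_Icc]; constructor <;> rintro ⟨h1, h2⟩ <;> constructor <;> linarith
    simp only [indicator_apply, mem]
    have : (1/2 : ℝ) * (y + 1) = (y+1) / 2 := by ring
    rw [this]
  have hsplit : ∫⁻ y in Icc (0:ℝ) 1, g y =
      (∫⁻ y in Icc (0:ℝ) (1/2), g y) + ∫⁻ y in Icc (1/2:ℝ) 1, g y := by
    have h1 : Icc (0:ℝ) 1 = Icc (0:ℝ) (1/2) ∪ Ioc (1/2:ℝ) 1 := by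
      ext y
      simp only [mem_Icc, mem_Ioc, mem_union]
      constructor
      · rintro ⟨h1, h2⟩
        rcases le_or_gt y (1/2) with h | h
        exacts [Or.inl ⟨h1, h⟩, Or.inr ⟨h, h2⟩]
      · rintro (⟨h1, h2⟩ | ⟨h1, h2⟩) <;> exact ⟨by linarith, by linarith⟩
    have hdisj : Disjoint (Icc (0:ℝ) (1/2)) (Ioc (1/2:ℝ) 1) := by
      rw [Set.disjoint_left]
      rintro y ⟨_, h⟩ ⟨h', _⟩
      exact absurd h (not_le.2 h')
    rw [h1, lintegral_union measurableSet_Ioc hdisj,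
      Measure.restrict_congr_set Ioc_ae_eq_Icc]
  rw [hA, hB, hsplit, ← mul_add, ← mul_assoc,
    show (1 / 2 : ℝ≥0∞) * 2 = 1 by
      rw [one_div]; exact ENNReal.inv_mul_cancel (by norm_num) (by norm_num), one_mul]

/-- the isometries `S_j` satisfy the Cuntz relations
`S_j* S_k = δ_{jk} I` and `Σ_k S_k S_k* = I` on `L²(μ₄ × λ)`, giving a representation of
the Cuntz algebra 𝒪₄.  Both relations are expressed as a.e.-pointwise identities. -/
theorem Sj_cuntz_relations
    (μ₄ : Measure ℝ) [IsProbabilityMeasure μ₄]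
    (hμ₄ : ∀ f : ℝ → ℝ≥0∞, Measurable f →
      ∫⁻ x, f x ∂μ₄ =
        (1 / 2) * (∫⁻ x, f (x / 4) ∂μ₄ + ∫⁻ x, f ((x + 2) / 4) ∂μ₄))
    (hsupp : μ₄ (Icc (0 : ℝ) 1)ᶜ = 0)
    (m : Fin 4 → ℝ × ℝ → ℂ) (hm : ∀ j, Measurable (m j))
    (hM : ∀ᵐ z ∂(μ₄.prod (volume.restrict (Icc (0 : ℝ) 1))),
      (Matrix.of fun j k : Fin 4 => m j (Ups k z)) ∈ Matrix.unitaryGroup (Fin 4) ℂ)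
    (hsur : ∀ᵐ z ∂(μ₄.prod (volume.restrict (Icc (0 : ℝ) 1))),
      ∃ ℓ : Fin 4, Ups ℓ (Rmap z) = z) :
    (∀ j k : Fin 4, ∀ f : ℝ × ℝ → ℂ,
      ∀ᵐ z ∂(μ₄.prod (volume.restrict (Icc (0 : ℝ) 1))),
        Sadj m j (Sop m k f) z = (if j = k then 1 else 0) * f z) ∧
    (∀ f : ℝ × ℝ → ℂ,
      ∀ᵐ z ∂(μ₄.prod (volume.restrict (Icc (0 : ℝ) 1))),
        ∑ k : Fin 4, Sop m k (Sadj m k f) z = f z) := by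
  set lam := volume.restrict (Icc (0:ℝ) 1) with hlam
  set μ := μ₄.prod lam with hμdef
  -- μ₄ gives no mass to {1}
  have hone : μ₄ {(1:ℝ)} = 0 := by
    have h4 : μ₄ {(4:ℝ)} = 0 := by
      refine measure_mono_null ?_ hsupp
      intro x hx
      simp only [mem_singleton_iff] at hx
      subst hx
      norm_num [mem_Icc]
    have h2 : μ₄ {(2:ℝ)} = 0 := by
      refine measure_mono_null ?_ hsupp
      intro x hx
      simp only [mem_singleton_iff] at hx
      subst hx
      norm_num [mem_Icc]
    have hmeas : Measurable (({(1:ℝ)} : Set ℝ).indicator (1 : ℝ → ℝ≥0∞)) :=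
      measurable_one.indicator (measurableSet_singleton 1)
    have key := hμ₄ _ hmeas
    have e1 : (fun x : ℝ => ({(1:ℝ)} : Set ℝ).indicator (1 : ℝ → ℝ≥0∞) (x / 4))
        = ({(4:ℝ)} : Set ℝ).indicator (1 : ℝ → ℝ≥0∞) := by
      funext x
      have : x / 4 ∈ ({(1:ℝ)} : Set ℝ) ↔ x ∈ ({(4:ℝ)} : Set ℝ) := by
        simp only [mem_singleton_iff]
        constructor <;> intro h <;> linarith
      simp only [indicator_apply, this, Pi.one_apply]
    have e2 : (fun x : ℝ => ({(1:ℝ)} : Set ℝ).indicator (1 : ℝ → ℝ≥0∞) ((x + 2) / 4))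
        = ({(2:ℝ)} : Set ℝ).indicator (1 : ℝ → ℝ≥0∞) := by
      funext x
      have : (x + 2) / 4 ∈ ({(1:ℝ)} : Set ℝ) ↔ x ∈ ({(2:ℝ)} : Set ℝ) := by
        simp only [mem_singleton_iff]
        constructor <;> intro h <;> linarith
      simp only [indicator_apply, this, Pi.one_apply]
    rw [lintegral_indicator_one (measurableSet_singleton _), e1, e2,
      lintegral_indicator_one (measurableSet_singleton _),
      lintegral_indicator_one (measurableSet_singleton _), h4, h2] at key
    simpa using key
  have hμIco : ∀ᵐ x ∂μ₄, x ∈ Ico (0:ℝ) 1 := by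
    rw [ae_iff]
    refine measure_mono_null (fun x hx => ?_) (measure_union_null hsupp hone)
    simp only [mem_setOf_eq, mem_Ico, not_and, not_lt] at hx
    by_cases h0 : (0:ℝ) ≤ x
    · by_cases h1 : x ≤ 1
      · right
        have := hx h0
        simp only [mem_singleton_iff]
        linarith
      · left; simp [mem_Icc]; intro; linarith
    · left; simp [mem_Icc]; intro h; exact absurd h h0
  have hlamIco : ∀ᵐ y ∂lam, y ∈ Ico (0:ℝ) 1 := by
    rw [ae_iff]
    have hset : {y : ℝ | ¬ y ∈ Ico (0:ℝ) 1} = (Ico (0:ℝ) 1)ᶜ := rfl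
    have hint : (Ico (0:ℝ) 1)ᶜ ∩ Icc (0:ℝ) 1 = {(1:ℝ)} := by
      ext y
      simp only [mem_inter_iff, mem_compl_iff, mem_Ico, mem_Icc, mem_singleton_iff,
        not_and, not_lt]
      constructor
      · rintro ⟨h1, h2, h3⟩
        have := h1 h2
        linarith
      · rintro rfl
        exact ⟨fun _ => le_refl 1, by norm_num, le_refl 1⟩
    rw [hset, hlam, Measure.restrict_apply measurableSet_Ico.compl, hint,
      Real.volume_singleton]
  -- coordinate invariances
  have hinv4 : ∀ f : ℝ → ℝ≥0∞, Measurable f →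
      ∫⁻ x, f (Int.fract (4 * x)) ∂μ₄ = ∫⁻ x, f x ∂μ₄ := by
    refine inv_gen μ₄ 4 2 (by norm_num) ?_ hμIco
    intro f hf
    simpa using hμ₄ f hf
  have hinv2 : ∀ f : ℝ → ℝ≥0∞, Measurable f →
      ∫⁻ y, f (Int.fract (2 * y)) ∂lam = ∫⁻ y, f y ∂lam := by
    refine inv_gen lam 2 1 (by norm_num) ?_ hlamIco
    intro f hf
    simpa using leb_selfsim f hf
  have hRm : Measurable Rmap :=
    ((measurable_fst.const_mul 4).fract.prodMk (measurable_snd.const_mul 2).fract)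
  -- preimages of null sets under Rmap are null
  have null_pre : ∀ N : Set (ℝ × ℝ), MeasurableSet N → μ N = 0 → μ (Rmap ⁻¹' N) = 0 := by
    intro N hN h0
    have hG : Measurable (N.indicator (1 : ℝ × ℝ → ℝ≥0∞)) := measurable_one.indicator hN
    have step1 : μ (Rmap ⁻¹' N) = ∫⁻ z, N.indicator 1 (Rmap z) ∂μ := by
      rw [← lintegral_indicator_one (hRm hN)]
      refine lintegral_congr fun z => ?_
      by_cases hz : Rmap z ∈ N <;> simp [indicator_apply, hz]
    rw [step1]
    have step2 : ∫⁻ z, N.indicator 1 (Rmap z) ∂μ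
        = ∫⁻ x, ∫⁻ y, N.indicator 1 (Int.fract (4*x), Int.fract (2*y)) ∂lam ∂μ₄ :=
      lintegral_prod _ (hG.comp hRm).aemeasurable
    rw [step2]
    have step3 : ∀ x : ℝ, ∫⁻ y, N.indicator 1 (Int.fract (4*x), Int.fract (2*y)) ∂lam
        = ∫⁻ y, N.indicator 1 (Int.fract (4*x), y) ∂lam := fun x =>
      hinv2 (fun y => N.indicator 1 (Int.fract (4*x), y))
        (hG.comp (measurable_const.prodMk measurable_id))
    rw [lintegral_congr step3]
    have step4 : ∫⁻ x, (fun x => ∫⁻ y, N.indicator 1 (x, y) ∂lam) (Int.fract (4*x)) ∂μ₄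
        = ∫⁻ x, ∫⁻ y, N.indicator 1 (x, y) ∂lam ∂μ₄ :=
      hinv4 _ hG.lintegral_prod_right'
    rw [show (fun x => ∫⁻ y, N.indicator 1 (Int.fract (4*x), y) ∂lam)
        = fun x => (fun x => ∫⁻ y, N.indicator 1 (x, y) ∂lam) (Int.fract (4*x)) from rfl,
      step4, ← lintegral_prod _ hG.aemeasurable, lintegral_indicator_one hN]
    exact h0
  -- transfer a.e. properties along Rmap
  have transfer : ∀ P : ℝ × ℝ → Prop, (∀ᵐ z ∂μ, P z) → (∀ᵐ z ∂μ, P (Rmap z)) := by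
    intro P hP
    rw [ae_iff] at hP ⊢
    have hsub : Rmap ⁻¹' {z | ¬ P z} ⊆ Rmap ⁻¹' (toMeasurable μ {z | ¬ P z}) :=
      preimage_mono (subset_toMeasurable _ _)
    have hnull : μ (Rmap ⁻¹' toMeasurable μ {z | ¬ P z}) = 0 :=
      null_pre _ (measurableSet_toMeasurable _ _) (by rwa [measure_toMeasurable])
    exact measure_mono_null hsub hnull
  -- a.e. every point lies in [0,1) × [0,1)
  have hzIco : ∀ᵐ z ∂μ, z.1 ∈ Ico (0:ℝ) 1 ∧ z.2 ∈ Ico (0:ℝ) 1 := by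
    have h1 : ∀ᵐ z ∂μ, z.1 ∈ Ico (0:ℝ) 1 := by
      rw [ae_iff]
      have hs : {z : ℝ × ℝ | ¬ z.1 ∈ Ico (0:ℝ) 1} = (Ico (0:ℝ) 1)ᶜ ×ˢ (univ : Set ℝ) := by
        ext z; simp [mem_prod]
      rw [hs, hμdef, Measure.prod_prod]
      rw [ae_iff] at hμIco
      rw [show ((Ico (0:ℝ) 1)ᶜ : Set ℝ) = {x : ℝ | ¬ x ∈ Ico (0:ℝ) 1} from rfl, hμIco,
        zero_mul]
    have h2 : ∀ᵐ z ∂μ, z.2 ∈ Ico (0:ℝ) 1 := by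
      rw [ae_iff]
      have hs : {z : ℝ × ℝ | ¬ z.2 ∈ Ico (0:ℝ) 1} = (univ : Set ℝ) ×ˢ (Ico (0:ℝ) 1)ᶜ := by
        ext z; simp [mem_prod]
      rw [hs, hμdef, Measure.prod_prod]
      rw [ae_iff] at hlamIco
      rw [show ((Ico (0:ℝ) 1)ᶜ : Set ℝ) = {x : ℝ | ¬ x ∈ Ico (0:ℝ) 1} from rfl, hlamIco,
        mul_zero]
    exact h1.and h2
  constructor
  · -- first Cuntz relation
    intro j k f
    filter_upwards [hzIco, hM] with z hz hU
    have hR : ∀ ℓ : Fin 4, Rmap (Ups ℓ z) = z := by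
      have h1 : Int.fract (4 * (z.1/4)) = z.1 := by
        rw [show 4*(z.1/4) = z.1 by ring, Int.fract_eq_self.2 ⟨hz.1.1, hz.1.2⟩]
      have h1' : Int.fract (4 * ((z.1+2)/4)) = z.1 := by
        rw [show 4*((z.1+2)/4) = z.1 + 2 by ring, show (2:ℝ) = ((2:ℤ):ℝ) by norm_num,
          Int.fract_add_intCast, Int.fract_eq_self.2 ⟨hz.1.1, hz.1.2⟩]
      have h2 : Int.fract (2 * (z.2/2)) = z.2 := by
        rw [show 2*(z.2/2) = z.2 by ring, Int.fract_eq_self.2 ⟨hz.2.1, hz.2.2⟩]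
      have h2' : Int.fract (2 * ((z.2+1)/2)) = z.2 := by
        rw [show 2*((z.2+1)/2) = z.2 + 1 by ring, show (1:ℝ) = ((1:ℤ):ℝ) by norm_num,
          Int.fract_add_intCast, Int.fract_eq_self.2 ⟨hz.2.1, hz.2.2⟩]
      intro ℓ
      fin_cases ℓ <;>
        simp only [Ups, Rmap, Matrix.cons_val_zero, Matrix.cons_val_one, Matrix.head_cons,
          Matrix.cons_val_two, Matrix.tail_cons, Matrix.cons_val_three] <;>
        exact Prod.ext (by first | simpa using h1 | simpa using h1') (by first | simpa using h2 | simpa using h2')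
    have hentry : ∀ a b : Fin 4,
        ∑ ℓ : Fin 4, m a (Ups ℓ z) * conj (m b (Ups ℓ z)) = if a = b then 1 else 0 := by
      intro a b
      have := congrFun (congrFun (Matrix.mem_unitaryGroup_iff.mp hU) a) b
      simpa [Matrix.mul_apply, Matrix.star_apply, Matrix.one_apply, Matrix.of_apply]
        using this
    show (1/2 : ℂ) * ∑ ℓ : Fin 4, conj (m j (Ups ℓ z)) * Sop m k f (Ups ℓ z)
        = (if j = k then 1 else 0) * f z
    calc (1/2 : ℂ) * ∑ ℓ : Fin 4, conj (m j (Ups ℓ z)) * Sop m k f (Ups ℓ z)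
        = ∑ ℓ : Fin 4, (m k (Ups ℓ z) * conj (m j (Ups ℓ z))) * f z := by
          rw [Finset.mul_sum]
          refine Finset.sum_congr rfl fun ℓ _ => ?_
          simp only [Sop, hR ℓ]
          ring
      _ = (∑ ℓ : Fin 4, m k (Ups ℓ z) * conj (m j (Ups ℓ z))) * f z := by
          rw [Finset.sum_mul]
      _ = (if k = j then 1 else 0) * f z := by rw [hentry k j]
      _ = (if j = k then 1 else 0) * f z := by
          congr 1
          exact if_congr eq_comm rfl rfl
  · -- second Cuntz relation
    intro f
    filter_upwards [hsur, transfer _ hM] with z hz hU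
    obtain ⟨ℓ₀, hw⟩ := hz
    have hentry : ∀ a b : Fin 4,
        ∑ kk : Fin 4, conj (m kk (Ups a (Rmap z))) * m kk (Ups b (Rmap z))
          = if a = b then 1 else 0 := by
      intro a b
      have := congrFun (congrFun (Matrix.mem_unitaryGroup_iff'.mp hU) a) b
      simpa [Matrix.mul_apply, Matrix.star_apply, Matrix.one_apply, Matrix.of_apply]
        using this
    have hmz : ∀ kk : Fin 4, m kk z = m kk (Ups ℓ₀ (Rmap z)) := fun kk => by rw [hw]
    calc ∑ kk : Fin 4, Sop m kk (Sadj m kk f) z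
        = ∑ kk : Fin 4, ∑ ℓ : Fin 4,
            (m kk (Ups ℓ₀ (Rmap z)) * conj (m kk (Ups ℓ (Rmap z)))) * f (Ups ℓ (Rmap z)) := by
          refine Finset.sum_congr rfl fun kk _ => ?_
          simp only [Sop, Sadj, hmz kk]
          rw [show (2:ℂ) * m kk (Ups ℓ₀ (Rmap z)) *
              ((1/2 : ℂ) * ∑ ℓ : Fin 4, conj (m kk (Ups ℓ (Rmap z))) * f (Ups ℓ (Rmap z)))
              = m kk (Ups ℓ₀ (Rmap z)) *
                ∑ ℓ : Fin 4, conj (m kk (Ups ℓ (Rmap z))) * f (Ups ℓ (Rmap z)) by ring,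
            Finset.mul_sum]
          exact Finset.sum_congr rfl fun ℓ _ => by ring
      _ = ∑ ℓ : Fin 4, (∑ kk : Fin 4,
            conj (m kk (Ups ℓ (Rmap z))) * m kk (Ups ℓ₀ (Rmap z))) * f (Ups ℓ (Rmap z)) := by
          rw [Finset.sum_comm]
          refine Finset.sum_congr rfl fun ℓ _ => ?_
          rw [Finset.sum_mul]
          exact Finset.sum_congr rfl fun kk _ => by ring
      _ = ∑ ℓ : Fin 4, (if ℓ = ℓ₀ then (1:ℂ) else 0) * f (Ups ℓ (Rmap z)) :=
          Finset.sum_congr rfl fun ℓ _ => by rw [hentry ℓ ℓ₀]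
      _ = f (Ups ℓ₀ (Rmap z)) := by
          simp only [ite_mul, one_mul, zero_mul, Finset.sum_ite_eq', Finset.mem_univ,
            if_true]
      _ = f z := by rw [hw]
end

section
/- Fix α_{00} = 1, α_{01} = α_{02} = 0. The system of equations: |α_{j0}|² + |α_{j1}|² + |α_{j2}|² = 1 for j = 1,2,3; α_{20} = 0; α_{11}·conj(α_{22}) + α_{12}·conj(α_{21}) = 0; α_{10}·conj(α_{30}) + α_{11}·conj(α_{31}) + α_{12}·conj(α_{32}) = 0; α_{21}·conj(α_{32}) + α_{22}·conj(α_{31}) = 0, has a solution (in the remaining variables α_{11}, α_{12}, α_{21}, α_{22}, α_{31}, α_{32}) for given α_{10}, α_{30} ∈ ℂ if and only if |α_{10}|² + |α_{30}|² = 1. -/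
open scoped ComplexConjugate

/-- with `α₀₀ = 1`, `α₀₁ = α₀₂ = 0` fixed, the unitarity system
(in the remaining coefficients) has a solution for given `α₁₀, α₃₀ ∈ ℂ` if and only if
`|α₁₀|² + |α₃₀|² = 1`. -/
theorem unitarity_system_solvable (α₁₀ α₃₀ : ℂ) :
    (∃ α₂₀ α₁₁ α₁₂ α₂₁ α₂₂ α₃₁ α₃₂ : ℂ,
      ‖α₁₀‖ ^ 2 + ‖α₁₁‖ ^ 2 + ‖α₁₂‖ ^ 2 = 1 ∧
      ‖α₂₀‖ ^ 2 + ‖α₂₁‖ ^ 2 + ‖α₂₂‖ ^ 2 = 1 ∧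
      ‖α₃₀‖ ^ 2 + ‖α₃₁‖ ^ 2 + ‖α₃₂‖ ^ 2 = 1 ∧
      α₂₀ = 0 ∧
      α₁₁ * conj α₂₂ + α₁₂ * conj α₂₁ = 0 ∧
      α₁₀ * conj α₃₀ + α₁₁ * conj α₃₁ + α₁₂ * conj α₃₂ = 0 ∧
      α₂₁ * conj α₃₂ + α₂₂ * conj α₃₁ = 0) ↔
    ‖α₁₀‖ ^ 2 + ‖α₃₀‖ ^ 2 = 1 := by
  constructor
  · rintro ⟨α₂₀, b, c, e, f, h, k, h1, h2, h3, h4, h5, h6, h7⟩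
    subst h4
    -- conjugate of h7
    have h7c : conj e * k + conj f * h = 0 := by
      have := congrArg (starRingEnd ℂ) h7
      simpa [map_add, map_mul] using this
    -- key cross relation b*k = c*h
    have hef : conj e * (b * k - c * h) = 0 := by
      linear_combination (-h) * h5 + b * h7c
    have hff : conj f * (b * k - c * h) = 0 := by
      linear_combination k * h5 - c * h7c
    have hbk : b * k = c * h := by
      by_cases he : e = 0
      · have hf : f ≠ 0 := by
          intro hf0
          rw [he, hf0] at h2
          simp at h2
        have hfc : conj f ≠ 0 := by simpa using hf
        rcases mul_eq_zero.mp hff with h' | h'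
        · exact absurd h' hfc
        · exact sub_eq_zero.mp h'
      · have hec : conj e ≠ 0 := by simpa using he
        rcases mul_eq_zero.mp hef with h' | h'
        · exact absurd h' hec
        · exact sub_eq_zero.mp h'
    have hbkc : conj b * conj k = conj c * conj h := by
      have := congrArg (starRingEnd ℂ) hbk
      simpa [map_mul] using this
    -- Cauchy–Schwarz equality
    have key : (α₁₀ * conj α₃₀) * conj (α₁₀ * conj α₃₀) =
        (b * conj b + c * conj c) * (h * conj h + k * conj k) := by
      have h6' : α₁₀ * conj α₃₀ = -(b * conj h + c * conj k) := by
        linear_combination h6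
      have h6c : conj α₁₀ * α₃₀ = -(conj b * h + conj c * k) := by
        have := congrArg (starRingEnd ℂ) h6'
        simpa [map_mul, map_add, map_neg] using this
      rw [h6']
      simp only [map_neg, map_add, map_mul, Complex.conj_conj]
      linear_combination (-(conj b * conj k - conj c * conj h)) * hbk
    -- turn into a real equation
    have keyR : ‖α₁₀‖ ^ 2 * ‖α₃₀‖ ^ 2 =
        (‖b‖ ^ 2 + ‖c‖ ^ 2) * (‖h‖ ^ 2 + ‖k‖ ^ 2) := by
      have := key
      simp only [Complex.mul_conj] at this
      rw [Complex.normSq_mul, Complex.normSq_conj] at this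
      have : (Complex.normSq α₁₀ * Complex.normSq α₃₀ : ℝ) =
          (Complex.normSq b + Complex.normSq c) *
          (Complex.normSq h + Complex.normSq k) := by
        exact_mod_cast this
      simpa [Complex.normSq_eq_norm_sq] using this
    have h2' : ‖b‖ ^ 2 + ‖c‖ ^ 2 = 1 - ‖α₁₀‖ ^ 2 := by
      have h0 : ((0 : ℂ) : ℂ) = 0 := rfl
      nlinarith [h1]
    have h3' : ‖h‖ ^ 2 + ‖k‖ ^ 2 = 1 - ‖α₃₀‖ ^ 2 := by nlinarith [h3]
    rw [h2', h3'] at keyR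
    nlinarith [keyR]
  · intro hsum
    refine ⟨0, conj α₃₀, 0, 1, 0, -(conj α₁₀), 0, ?_, ?_, ?_, rfl, ?_, ?_, ?_⟩
    · simpa using hsum
    · simp
    · simp at hsum ⊢
      linarith
    · simp
    · ring_nf
      simp [Complex.conj_conj]
      ring
    · simp
end

section
/- There is no choice of complex scalars a_{jk} (j,k = 0,...,3) such that: (i) a_{00} = a_{01} = a_{02} = a_{03} = 1/2, (ii) a_{j0} + a_{j2} = a_{j1} + a_{j3} for all j, and (iii) the matrix with rows (a_{00}, a_{01}, a_{02}, a_{03}), (a_{10}, e^{4πi/3}a_{11}, a_{12}, e^{4πi/3}a_{13}), (a_{20}, e^{2πi/3}a_{21}, a_{22}, e^{2πi/3}a_{23}), (a_{30}, a_{31}, a_{32}, a_{33}) is unitary. -/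
open Complex
open scoped Real

private lemma aux_exp2 : Complex.exp (2 * π * Complex.I / 3) ≠ -1 := by
  intro h
  have h3 : Complex.exp (2 * π * Complex.I / 3) ^ 3 = -1 := by rw [h]; ring
  rw [← Complex.exp_nat_mul] at h3
  have e : ((3:ℕ):ℂ) * (2 * π * Complex.I / 3) = 2 * π * Complex.I := by push_cast; ring
  rw [e, Complex.exp_two_pi_mul_I] at h3
  norm_num at h3

private lemma aux_exp4 : Complex.exp (4 * π * Complex.I / 3) ≠ -1 := by
  intro h
  have h3 : Complex.exp (4 * π * Complex.I / 3) ^ 3 = -1 := by rw [h]; ring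
  rw [← Complex.exp_nat_mul] at h3
  have e : ((3:ℕ):ℂ) * (4 * π * Complex.I / 3) = ((2:ℕ):ℂ) * (2 * π * Complex.I) := by
    push_cast; ring
  rw [e, Complex.exp_nat_mul, Complex.exp_two_pi_mul_I] at h3
  norm_num at h3

/-- no-go result for μ₃: there are no complex scalars `a_{jk}` with
(i) `a_{0k} = 1/2` for all `k`, (ii) `a_{j0} + a_{j2} = a_{j1} + a_{j3}` for all `j`,
such that the matrix with rows `(a_{00}, a_{01}, a_{02}, a_{03})`,
`(a_{10}, e^{4πi/3}a_{11}, a_{12}, e^{4πi/3}a_{13})`,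
`(a_{20}, e^{2πi/3}a_{21}, a_{22}, e^{2πi/3}a_{23})`,
`(a_{30}, a_{31}, a_{32}, a_{33})` is unitary. -/
theorem no_go_cantor3 :
    ¬ ∃ a : Fin 4 → Fin 4 → ℂ,
      (∀ k : Fin 4, a 0 k = 1 / 2) ∧
      (∀ j : Fin 4, a j 0 + a j 2 = a j 1 + a j 3) ∧
      (Matrix.of fun j k : Fin 4 =>
          (if k = 1 ∨ k = 3 then
            (if j = 1 then Complex.exp (4 * π * Complex.I / 3)
             else if j = 2 then Complex.exp (2 * π * Complex.I / 3)
             else 1)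
           else 1) * a j k) ∈ Matrix.unitaryGroup (Fin 4) ℂ := by
  rintro ⟨a, h0, hsum, hU⟩
  set ε1 := Complex.exp (4 * π * Complex.I / 3) with hε1
  set ε2 := Complex.exp (2 * π * Complex.I / 3) with hε2
  have hM := Matrix.mem_unitaryGroup_iff.mp hU
  have hM' := Matrix.mem_unitaryGroup_iff'.mp hU
  have hc : (starRingEnd ℂ) (1/2 : ℂ) = 1/2 := by
    rw [map_div₀, map_one, Complex.conj_ofNat]
  -- row orthogonality with row 0
  have row : ∀ j : Fin 4, j ≠ 0 →
      a j 0 + (if j = 1 then ε1 else if j = 2 then ε2 else 1) * a j 1 + a j 2 +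
        (if j = 1 then ε1 else if j = 2 then ε2 else 1) * a j 3 = 0 := by
    intro j hj
    have e := congrFun (congrFun hM j) 0
    simp only [Matrix.mul_apply, Fin.sum_univ_four, Matrix.star_apply, Matrix.of_apply,
      Matrix.one_apply, hj, if_neg] at e
    simp only [show (0:Fin 4) ≠ 1 by decide, show (0:Fin 4) ≠ 2 by decide, h0,
      if_false] at e
    fin_cases j <;> simp_all <;> linear_combination 2 * e
  have s1 : a 1 0 + a 1 2 = 0 := by
    have e := row 1 (by decide)
    rw [if_pos rfl] at e
    have : (1 + ε1) * (a 1 0 + a 1 2) = 0 := by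
      have h := hsum 1
      linear_combination e + ε1 * h
    rcases mul_eq_zero.mp this with h | h
    · exact absurd (by linear_combination h) aux_exp4
    · exact h
  have s2 : a 2 0 + a 2 2 = 0 := by
    have e := row 2 (by decide)
    rw [if_neg (by decide : ¬((2:Fin 4) = 1)), if_pos rfl] at e
    have : (1 + ε2) * (a 2 0 + a 2 2) = 0 := by
      have h := hsum 2
      linear_combination e + ε2 * h
    rcases mul_eq_zero.mp this with h | h
    · exact absurd (by linear_combination h) aux_exp2
    · exact h
  have s3 : a 3 0 + a 3 2 = 0 := by
    have e := row 3 (by decide)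
    rw [if_neg (by decide : ¬((3:Fin 4) = 1)), if_neg (by decide : ¬((3:Fin 4) = 2)),
      one_mul, one_mul] at e
    have h := hsum 3
    linear_combination (e + h) / 2
  -- column relations
  have col : ∀ k l : Fin 4, ¬(k = 1 ∨ k = 3) → ¬(l = 1 ∨ l = 3) →
      (starRingEnd ℂ) (a 0 k) * a 0 l + (starRingEnd ℂ) (a 1 k) * a 1 l +
        (starRingEnd ℂ) (a 2 k) * a 2 l + (starRingEnd ℂ) (a 3 k) * a 3 l
        = if k = l then 1 else 0 := by
    intro k l hk hl
    have e := congrFun (congrFun hM' k) l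
    simp only [Matrix.mul_apply, Fin.sum_univ_four, Matrix.star_apply, Matrix.of_apply,
      Matrix.one_apply, hk, hl, if_false, one_mul] at e
    exact e
  have c00 := col 0 0 (by decide) (by decide)
  have c02 := col 0 2 (by decide) (by decide)
  have c20 := col 2 0 (by decide) (by decide)
  have c22 := col 2 2 (by decide) (by decide)
  simp only [if_pos rfl, show ((0:Fin 4) = 2) = False by simp, show ((2:Fin 4) = 0) = False by simp,
    if_false] at c00 c02 c20 c22
  -- substitute a j 2 = -(a j 0)
  have r1 : a 1 2 = -(a 1 0) := by linear_combination s1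
  have r2 : a 2 2 = -(a 2 0) := by linear_combination s2
  have r3 : a 3 2 = -(a 3 0) := by linear_combination s3
  simp only [if_true, h0, r1, r2, r3, map_neg, hc] at c00 c02 c20 c22
  have : (1:ℂ) = 2 := by linear_combination c00 + c02 + c20 + c22
  norm_num at this
end
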